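/- arXiv:1303.3789 — 2 statements merged into one kernel-verified Lean document; each statement's English description precedes it below -/
import Mathlib

section
/- Let S = ⟨qm₁,…,qm_d, pn₁,…,pn_k⟩ be a specific gluing of S₁ and S₂, and let x∈S₁ be nonzero. Then the following are equivalent: (1) S is symmetric and M-pure with respect to qx, and S₁ (or S₂) is symmetric; (2) S₁ is symmetric and M-pure with respect to x, and S₂ is symmetric and M-pure with respect to q. -/
open scoped Pointwise

/-- `S ⊆ ℕ` is a numerical semigroup: it contains `0`, is closed under
addition, and has finite complement in `ℕ`. -/
def IsNumSgp (S : Set ℕ) : Prop :=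
  (0 : ℕ) ∈ S ∧ (∀ a ∈ S, ∀ b ∈ S, a + b ∈ S) ∧ {x : ℕ | x ∉ S}.Finite

/-- `nM S t` is the `t`-fold sumset of the maximal ideal `M = S \ {0}`,
with the convention `nM S 0 = S`. -/
def nM (S : Set ℕ) : ℕ → Set ℕ
  | 0 => S
  | t + 1 => (S \ {0}) + nM S t

/-- the order of `s` with respect to `S` : the largest `t` with `s ∈ tM`. -/
noncomputable def ordS (S : Set ℕ) (s : ℕ) : ℕ := sSup {t : ℕ | s ∈ nM S t}

/-- the multiplicity of `S` : its least nonzero element. -/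
noncomputable def mult (S : Set ℕ) : ℕ := sInf {x : ℕ | x ∈ S ∧ x ≠ 0}

/-- the Apéry set of `S` with respect to `x` : elements `s ∈ S` with `s - x ∉ S`. -/
def Ap (S : Set ℕ) (x : ℕ) : Set ℕ := {s : ℕ | s ∈ S ∧ ¬ ∃ t ∈ S, s = t + x}

/-- membership of an integer in (the image in `ℤ` of) `S`. -/
def zmem (S : Set ℕ) (z : ℤ) : Prop := ∃ t ∈ S, (t : ℤ) = z

/-- the Frobenius number of `S` : the largest integer not in `S`. -/
noncomputable def Frob (S : Set ℕ) : ℤ := sSup {z : ℤ | ¬ zmem S z}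

/-- `S` is symmetric: for every integer `z`, `z ∈ S` iff `F(S) - z ∉ S`. -/
def IsSymmetric (S : Set ℕ) : Prop := ∀ z : ℤ, zmem S z ↔ ¬ zmem S (Frob S - z)

/-- the set of maximal elements of `Ap S x` with respect to the order
`u ⪯ v` iff `v = u + z` for some `z ∈ S`. -/
def MaxAp (S : Set ℕ) (x : ℕ) : Set ℕ :=
  {w : ℕ | w ∈ Ap S x ∧ ∀ y ∈ Ap S x, (∃ z ∈ S, y = w + z) → y = w}

/-- the set of maximal elements of `Ap S x` with respect to the order
`u ⪯_M v` iff `v = u + z` for some `z ∈ S` with `ord(v) = ord(u) + ord(z)`. -/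
def MaxMAp (S : Set ℕ) (x : ℕ) : Set ℕ :=
  {w : ℕ | w ∈ Ap S x ∧ ∀ y ∈ Ap S x,
    (∃ z ∈ S, y = w + z ∧ ordS S y = ordS S w + ordS S z) → y = w}

/-- `S` is M-pure with respect to `x` : all maximal elements of `Ap S x`
under `⪯_M` have the same order. -/
def MPureWrt (S : Set ℕ) (x : ℕ) : Prop :=
  ∀ w ∈ MaxMAp S x, ∀ w' ∈ MaxMAp S x, ordS S w = ordS S w'

/-- `S` is M-pure : it is M-pure with respect to its multiplicity. -/
def MPure (S : Set ℕ) : Prop := MPureWrt S (mult S)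

/-- `β_i(x)` : the number of elements of `Ap S x` of order `i`. -/
noncomputable def betaS (S : Set ℕ) (x i : ℕ) : ℕ := {w ∈ Ap S x | ordS S w = i}.ncard

/-- `d(x)` : the maximal order of an element of `Ap S x`. -/
noncomputable def dS (S : Set ℕ) (x : ℕ) : ℕ := sSup (ordS S '' Ap S x)

/-- the reduction number of `S` : the least `r` with `(r+1)M = m(S) + rM`. -/
noncomputable def redNum (S : Set ℕ) : ℕ :=
  sInf {r : ℕ | nM S (r + 1) = (fun y => mult S + y) '' nM S r}

/-- `l_x(S) = max { ord(s+x) - ord(x) - ord(s) : s ∈ S, ord(s) ≤ r }`. -/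
noncomputable def lS (S : Set ℕ) (x : ℕ) : ℕ :=
  sSup {t : ℕ | ∃ s ∈ S, ordS S s ≤ redNum S ∧ t = ordS S (s + x) - ordS S x - ordS S s}

/-- the Hilbert function of `S`. -/
noncomputable def HilbS (S : Set ℕ) (t : ℕ) : ℕ := (nM S t \ nM S (t + 1)).ncard

/-- The data of a gluing `S = ⟨q m₁, …, q m_d, p n₁, …, p n_k⟩` of two numerical
semigroups `S₁ = ⟨m₁, …, m_d⟩` and `S₂ = ⟨n₁, …, n_k⟩`, minimally generated by
`m₁ < ⋯ < m_d` and `n₁ < ⋯ < n_k`, where `p ∈ S₁ \ {m₁, …, m_d}`,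
`q ∈ S₂ \ {n₁, …, n_k}` and `gcd(p, q) = 1`. -/
structure Gluing where
  d : ℕ
  k : ℕ
  hd : 0 < d
  hk : 0 < k
  m : Fin d → ℕ
  n : Fin k → ℕ
  p : ℕ
  q : ℕ
  hm : StrictMono m
  hn : StrictMono n
  hmin₁ : ∀ i, m i ∉ AddSubmonoid.closure (Set.range m \ {m i})
  hmin₂ : ∀ j, n j ∉ AddSubmonoid.closure (Set.range n \ {n j})
  hnum₁ : IsNumSgp (AddSubmonoid.closure (Set.range m) : Set ℕ)
  hnum₂ : IsNumSgp (AddSubmonoid.closure (Set.range n) : Set ℕ)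
  hp : p ∈ AddSubmonoid.closure (Set.range m)
  hq : q ∈ AddSubmonoid.closure (Set.range n)
  hpm : p ∉ Set.range m
  hqn : q ∉ Set.range n
  hpq : Nat.gcd p q = 1

/-- the numerical semigroup `S₁ = ⟨m₁, …, m_d⟩`. -/
def Gluing.S₁ (G : Gluing) : Set ℕ := (AddSubmonoid.closure (Set.range G.m) : Set ℕ)

/-- the numerical semigroup `S₂ = ⟨n₁, …, n_k⟩`. -/
def Gluing.S₂ (G : Gluing) : Set ℕ := (AddSubmonoid.closure (Set.range G.n) : Set ℕ)

/-- the glued numerical semigroup `S = ⟨q m₁, …, q m_d, p n₁, …, p n_k⟩`. -/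
def Gluing.S (G : Gluing) : Set ℕ :=
  (AddSubmonoid.closure
    ((fun x => G.q * x) '' Set.range G.m ∪ (fun x => G.p * x) '' Set.range G.n) : Set ℕ)

/-- the smallest generator `m₁` of `S₁`. -/
def Gluing.m₁ (G : Gluing) : ℕ := G.m ⟨0, G.hd⟩

/-- the smallest generator `n₁` of `S₂`. -/
def Gluing.n₁ (G : Gluing) : ℕ := G.n ⟨0, G.hk⟩

/-- the gluing is specific if `ord_{S₂}(q) + l_q(S₂) ≤ ord_{S₁}(p)`. -/
def Gluing.Specific (G : Gluing) : Prop := ordS G.S₂ G.q + lS G.S₂ G.q ≤ ordS G.S₁ G.p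

/-- the gluing is nice if `q = a n₁` for some `1 < a ≤ ord_{S₁}(p)`. -/
def Gluing.Nice (G : Gluing) : Prop := ∃ a : ℕ, 1 < a ∧ a ≤ ordS G.S₁ G.p ∧ G.q = a * G.n₁

namespace NSAux

lemma mem_nM_succ {S : Set ℕ} {t s : ℕ} :
    s ∈ nM S (t + 1) ↔ ∃ g ∈ S \ {0}, ∃ y ∈ nM S t, g + y = s := by
  show s ∈ (S \ {0}) + nM S t ↔ _
  simp [Set.mem_add]

lemma S_add_nM {S : Set ℕ} (hadd : ∀ a ∈ S, ∀ b ∈ S, a + b ∈ S) {t v y : ℕ}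
    (hv : v ∈ S) (hy : y ∈ nM S t) : v + y ∈ nM S t := by
  induction t generalizing y with
  | zero => exact hadd v hv y hy
  | succ t ih =>
    obtain ⟨g, hg, y', hy', rfl⟩ := mem_nM_succ.1 hy
    have : g + (v + y') = v + (g + y') := by ring
    exact mem_nM_succ.2 ⟨g, hg, v + y', ih hy', this.symm ▸ rfl⟩

lemma nM_subset {S : Set ℕ} (hadd : ∀ a ∈ S, ∀ b ∈ S, a + b ∈ S)
    {t : ℕ} : nM S t ⊆ S := by
  induction t with
  | zero => exact fun s hs => hs
  | succ t ih =>
    intro s hs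
    obtain ⟨g, hg, y, hy, rfl⟩ := mem_nM_succ.1 hs
    exact hadd g hg.1 y (ih hy)

lemma nM_succ_subset {S : Set ℕ} (hadd : ∀ a ∈ S, ∀ b ∈ S, a + b ∈ S)
    {t : ℕ} : nM S (t + 1) ⊆ nM S t := by
  intro s hs
  obtain ⟨g, hg, y, hy, rfl⟩ := mem_nM_succ.1 hs
  exact S_add_nM hadd hg.1 hy

lemma nM_mono {S : Set ℕ} (hadd : ∀ a ∈ S, ∀ b ∈ S, a + b ∈ S)
    {t t' : ℕ} (h : t ≤ t') : nM S t' ⊆ nM S t := by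
  induction h with
  | refl => exact fun s hs => hs
  | step h ih => exact fun s hs => ih (nM_succ_subset hadd hs)

lemma add_mem_nM {S : Set ℕ} (hadd : ∀ a ∈ S, ∀ b ∈ S, a + b ∈ S)
    {t u a b : ℕ} (ha : a ∈ nM S t) (hb : b ∈ nM S u) : a + b ∈ nM S (t + u) := by
  induction t generalizing a with
  | zero =>
    have : a + b ∈ nM S u := S_add_nM hadd ha hb
    simpa using this
  | succ t ih =>
    obtain ⟨g, hg, y, hy, rfl⟩ := mem_nM_succ.1 ha
    have : g + y + b = g + (y + b) := by ring
    rw [this]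
    have h2 : g + (y + b) ∈ nM S ((t + u) + 1) := mem_nM_succ.2 ⟨g, hg, y + b, ih hy, rfl⟩
    have h3 : t + 1 + u = (t + u) + 1 := by ring
    rw [h3]; exact h2

lemma le_of_mem_nM {S : Set ℕ} {t s : ℕ} (hs : s ∈ nM S t) : t ≤ s := by
  induction t generalizing s with
  | zero => exact Nat.zero_le s
  | succ t ih =>
    obtain ⟨g, hg, y, hy, rfl⟩ := mem_nM_succ.1 hs
    have hg1 : 1 ≤ g := Nat.one_le_iff_ne_zero.2 (by simpa using hg.2)
    have := ih hy
    omega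

lemma bddAbove_nM_set {S : Set ℕ} (s : ℕ) : BddAbove {t : ℕ | s ∈ nM S t} :=
  ⟨s, fun _ ht => le_of_mem_nM ht⟩

lemma mem_nM_ordS {S : Set ℕ} {s : ℕ} (hs : s ∈ S) : s ∈ nM S (ordS S s) := by
  have : ordS S s ∈ {t : ℕ | s ∈ nM S t} :=
    Nat.sSup_mem ⟨0, hs⟩ (bddAbove_nM_set s)
  exact this

lemma le_ordS_of_mem {S : Set ℕ} {s t : ℕ} (h : s ∈ nM S t) : t ≤ ordS S s :=
  le_csSup (bddAbove_nM_set s) h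

lemma not_mem_nM_ordS_succ {S : Set ℕ} (s : ℕ) : s ∉ nM S (ordS S s + 1) := by
  intro h
  have := le_ordS_of_mem h
  omega

lemma ordS_superadd {S : Set ℕ} (hadd : ∀ a ∈ S, ∀ b ∈ S, a + b ∈ S)
    {a b : ℕ} (ha : a ∈ S) (hb : b ∈ S) : ordS S a + ordS S b ≤ ordS S (a + b) :=
  le_ordS_of_mem (add_mem_nM hadd (mem_nM_ordS ha) (mem_nM_ordS hb))

lemma one_le_ordS {S : Set ℕ} (h0 : 0 ∈ S) {s : ℕ} (hs : s ∈ S) (hs0 : s ≠ 0) :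
    1 ≤ ordS S s := by
  refine le_ordS_of_mem (mem_nM_succ.2 ⟨s, ⟨hs, by simpa using hs0⟩, 0, h0, by ring⟩)

lemma ordS_le_self {S : Set ℕ} {s : ℕ} (hs : s ∈ S) : ordS S s ≤ s :=
  le_of_mem_nM (mem_nM_ordS hs)

lemma ordS_eq_zero_of_not_mem {S : Set ℕ} (hadd : ∀ a ∈ S, ∀ b ∈ S, a + b ∈ S)
    {s : ℕ} (hs : s ∉ S) : ordS S s = 0 := by
  have : {t : ℕ | s ∈ nM S t} = ∅ := by
    ext t
    simp only [Set.mem_setOf_eq, Set.mem_empty_iff_false, iff_false]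
    exact fun h => hs (nM_subset hadd h)
  rw [ordS, this]
  simp

lemma exists_conductor {S : Set ℕ} (h : IsNumSgp S) : ∃ c : ℕ, ∀ v, c ≤ v → v ∈ S := by
  obtain ⟨B, hB⟩ := h.2.2.bddAbove
  exact ⟨B + 1, fun v hv => by
    by_contra hvS
    have : v ≤ B := hB hvS
    omega⟩

lemma mult_mem {S : Set ℕ} (h : IsNumSgp S) : mult S ∈ S ∧ mult S ≠ 0 := by
  obtain ⟨c, hc⟩ := exists_conductor h
  have hne : (c + 1) ∈ {x : ℕ | x ∈ S ∧ x ≠ 0} := ⟨hc _ (by omega), by omega⟩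
  exact Nat.sInf_mem ⟨c + 1, hne⟩

lemma mult_le {S : Set ℕ} {s : ℕ} (hs : s ∈ S) (hs0 : s ≠ 0) : mult S ≤ s :=
  Nat.sInf_le ⟨hs, hs0⟩

lemma smul_mult_add_mem_nM {S : Set ℕ} (h : IsNumSgp S) {v : ℕ} (hv : v ∈ S) (t : ℕ) :
    t * mult S + v ∈ nM S t := by
  induction t with
  | zero => simpa [nM] using hv
  | succ t ih =>
    have : (t + 1) * mult S + v = mult S + (t * mult S + v) := by ring
    rw [this]
    exact mem_nM_succ.2 ⟨mult S, ⟨(mult_mem h).1, by simpa using (mult_mem h).2⟩,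
      _, ih, rfl⟩

end NSAux
namespace NSAux

lemma lemmaA {S : Set ℕ} (h : IsNumSgp S) :
    ∀ t s, s ∈ nM S (t + 1) → s < mult S * (t + 1) + (t + 1) →
    ∃ y ∈ nM S t, s = mult S + y := by
  intro t
  induction t with
  | zero =>
    intro s hs hlt
    obtain ⟨g, hg, y, hy, rfl⟩ := mem_nM_succ.1 hs
    have hgm : mult S ≤ g := mult_le hg.1 (by simpa using hg.2)
    have hy0 : y = 0 ∧ g = mult S := by omega
    exact ⟨y, hy, by omega⟩
  | succ t ih =>
    intro s hs hlt
    obtain ⟨g, hg, y, hy, rfl⟩ := mem_nM_succ.1 hs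
    by_cases hgm : g = mult S
    · exact ⟨y, hy, by omega⟩
    · have hgm' : mult S + 1 ≤ g := by
        have := mult_le hg.1 (by simpa using hg.2)
        omega
      have hylt : y < mult S * (t + 1) + (t + 1) := by
        have := le_of_mem_nM hy
        nlinarith
      obtain ⟨y', hy', hyeq⟩ := ih y hy hylt
      refine ⟨g + y', mem_nM_succ.2 ⟨g, hg, y', hy', rfl⟩, by omega⟩

lemma exists_red {S : Set ℕ} (h : IsNumSgp S) :
    ∃ r : ℕ, nM S (r + 1) = (fun y => mult S + y) '' nM S r := by
  obtain ⟨c, hc⟩ := exists_conductor h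
  refine ⟨c, le_antisymm ?_ ?_⟩
  · intro s hs
    by_cases hlt : s < mult S * (c + 1) + (c + 1)
    · obtain ⟨y, hy, hyeq⟩ := lemmaA h c s hs hlt
      exact ⟨y, hy, hyeq.symm⟩
    · push_neg at hlt
      have hm1 : 1 ≤ mult S := Nat.one_le_iff_ne_zero.2 (mult_mem h).2
      set w := s - mult S * (c + 1) with hw
      have hwc : c ≤ w := by omega
      have hws : s = mult S + (c * mult S + w) := by
        have hmc : mult S * (c + 1) = mult S + c * mult S := by ring
        omega
      refine ⟨c * mult S + w, smul_mult_add_mem_nM h (hc w hwc) c, hws.symm⟩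
  · rintro s ⟨y, hy, rfl⟩
    exact mem_nM_succ.2 ⟨mult S, ⟨(mult_mem h).1, by simpa using (mult_mem h).2⟩, y, hy, rfl⟩

lemma red_succ {S : Set ℕ} {r : ℕ}
    (hr : nM S (r + 1) = (fun y => mult S + y) '' nM S r) :
    nM S (r + 2) = (fun y => mult S + y) '' nM S (r + 1) := by
  ext s
  constructor
  · intro hs
    obtain ⟨g, hg, y, hy, rfl⟩ := mem_nM_succ.1 hs
    rw [hr] at hy
    obtain ⟨y', hy', rfl⟩ := hy
    exact ⟨g + y', mem_nM_succ.2 ⟨g, hg, y', hy', rfl⟩, by dsimp; ring⟩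
  · rintro ⟨y, hy, rfl⟩
    obtain ⟨g, hg, y', hy', rfl⟩ := mem_nM_succ.1 hy
    have : (fun y => mult S + y) (g + y') = g + (mult S + y') := by dsimp; ring
    rw [this]
    refine mem_nM_succ.2 ⟨g, hg, mult S + y', ?_, rfl⟩
    rw [hr]
    exact ⟨y', hy', rfl⟩

lemma redNum_spec {S : Set ℕ} (h : IsNumSgp S) :
    nM S (redNum S + 1) = (fun y => mult S + y) '' nM S (redNum S) :=
  Nat.sInf_mem (exists_red h)

lemma red_all {S : Set ℕ} (h : IsNumSgp S) :
    ∀ t, redNum S ≤ t → nM S (t + 1) = (fun y => mult S + y) '' nM S t := by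
  intro t ht
  induction t, ht using Nat.le_induction with
  | base => exact redNum_spec h
  | succ t ht ih => exact red_succ ih

lemma peel {S : Set ℕ} (h : IsNumSgp S) {t : ℕ} (ht : redNum S ≤ t) :
    ∀ s ∈ nM S t, ∃ y ∈ nM S (redNum S), s = (t - redNum S) * mult S + y := by
  induction t, ht using Nat.le_induction with
  | base => exact fun s hs => ⟨s, hs, by simp⟩
  | succ t ht ih =>
    intro s hs
    rw [red_all h t ht] at hs
    obtain ⟨y, hy, hyeq⟩ := hs
    obtain ⟨y', hy', hyeq'⟩ := ih y hy
    refine ⟨y', hy', ?_⟩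
    simp only at hyeq
    have h2 : (t + 1 - redNum S) * mult S = mult S + (t - redNum S) * mult S := by
      have : t + 1 - redNum S = (t - redNum S) + 1 := by omega
      rw [this]; ring
    omega

lemma ord_peel {S : Set ℕ} (h : IsNumSgp S) {s : ℕ} (hs : s ∈ S)
    (hr : redNum S ≤ ordS S s) :
    ∃ y, y ∈ nM S (redNum S) ∧ s = (ordS S s - redNum S) * mult S + y ∧
      ordS S y = redNum S := by
  obtain ⟨y, hy, hyeq⟩ := peel h hr s (mem_nM_ordS hs)
  have hyS : y ∈ S := nM_subset h.2.1 hy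
  have h1 : redNum S ≤ ordS S y := le_ordS_of_mem hy
  have h2 : ordS S y ≤ redNum S := by
    have hsm : (ordS S s - redNum S) * mult S + y ∈
        nM S ((ordS S s - redNum S) + ordS S y) :=
      add_mem_nM h.2.1 (by simpa using smul_mult_add_mem_nM h h.1 (ordS S s - redNum S))
        (mem_nM_ordS hyS)
    have h3 := le_ordS_of_mem hsm
    rw [← hyeq] at h3
    omega
  exact ⟨y, hy, hyeq, le_antisymm h2 h1⟩

lemma lS_bddAbove {S : Set ℕ} (h : IsNumSgp S) (x : ℕ) :
    BddAbove {t : ℕ | ∃ s ∈ S, ordS S s ≤ redNum S ∧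
      t = ordS S (s + x) - ordS S x - ordS S s} := by
  obtain ⟨c, hc⟩ := exists_conductor h
  refine ⟨(redNum S + 1) * mult S + c + x, ?_⟩
  rintro t ⟨s, hsS, hord, rfl⟩
  have hsb : s < (redNum S + 1) * mult S + c := by
    by_contra hb
    push_neg at hb
    have : s = (redNum S + 1) * mult S + (s - (redNum S + 1) * mult S) := by omega
    have hmem : s ∈ nM S (redNum S + 1) := by
      rw [this]
      exact smul_mult_add_mem_nM h (hc _ (by omega)) _
    have := le_ordS_of_mem hmem
    omega
  have hsx : s + x ∈ S ∨ s + x ∉ S := em _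
  have : ordS S (s + x) ≤ s + x := by
    rcases hsx with h' | h'
    · exact ordS_le_self h'
    · rw [ordS_eq_zero_of_not_mem h.2.1 h']; omega
  omega

lemma ord_add_le_of_le_red {S : Set ℕ} (h : IsNumSgp S) {s x : ℕ}
    (hs : s ∈ S) (hord : ordS S s ≤ redNum S) :
    ordS S (s + x) ≤ ordS S s + ordS S x + lS S x := by
  have hmem : ordS S (s + x) - ordS S x - ordS S s ∈
      {t : ℕ | ∃ s ∈ S, ordS S s ≤ redNum S ∧
        t = ordS S (s + x) - ordS S x - ordS S s} := ⟨s, hs, hord, rfl⟩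
  have := le_csSup (lS_bddAbove h x) hmem
  rw [lS]
  omega

lemma ord_add_le {S : Set ℕ} (h : IsNumSgp S) {s x : ℕ}
    (hs : s ∈ S) (hx : x ∈ S) :
    ordS S (s + x) ≤ ordS S s + ordS S x + lS S x := by
  by_cases hord : ordS S s ≤ redNum S
  · exact ord_add_le_of_le_red h hs hord
  · push_neg at hord
    obtain ⟨y, hy, hyeq, hyord⟩ := ord_peel h hs (le_of_lt hord)
    have hyS : y ∈ S := nM_subset h.2.1 hy
    have hsxS : s + x ∈ S := h.2.1 s hs x hx
    have hTt : ordS S s ≤ ordS S (s + x) := by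
      have := ordS_superadd h.2.1 hs hx
      omega
    obtain ⟨z, hz, hzeq⟩ := peel h (show redNum S ≤ ordS S (s + x) by omega)
      (s + x) (mem_nM_ordS hsxS)
    have h1 : (ordS S (s + x) - redNum S) * mult S =
        (ordS S (s + x) - ordS S s) * mult S + (ordS S s - redNum S) * mult S := by
      have he : ordS S (s + x) - redNum S =
          (ordS S (s + x) - ordS S s) + (ordS S s - redNum S) := by omega
      rw [he, Nat.add_mul]
    have key : y + x = (ordS S (s + x) - ordS S s) * mult S + z := by omega
    have hlow : (ordS S (s + x) - ordS S s) + redNum S ≤ ordS S (y + x) := by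
      have h2 : (ordS S (s + x) - ordS S s) * mult S + z ∈
          nM S ((ordS S (s + x) - ordS S s) + redNum S) :=
        add_mem_nM h.2.1
          (by simpa using smul_mult_add_mem_nM h h.1 (ordS S (s + x) - ordS S s)) hz
      rw [← key] at h2
      exact le_ordS_of_mem h2
    have hup : ordS S (y + x) ≤ redNum S + ordS S x + lS S x := by
      have h3 := ord_add_le_of_le_red h hyS (le_of_eq hyord) (x := x)
      omega
    omega

lemma add_smul_mem {S : Set ℕ} (hadd : ∀ a ∈ S, ∀ b ∈ S, a + b ∈ S) {s x : ℕ}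
    (hs : s ∈ S) (hx : x ∈ S) (c : ℕ) : s + c * x ∈ S := by
  induction c with
  | zero => simpa using hs
  | succ c ih =>
    have : s + (c + 1) * x = (s + c * x) + x := by ring
    rw [this]
    exact hadd _ ih x hx

lemma ord_add_smul_le {S : Set ℕ} (h : IsNumSgp S) {s x : ℕ}
    (hs : s ∈ S) (hx : x ∈ S) (c : ℕ) :
    ordS S (s + c * x) ≤ ordS S s + c * (ordS S x + lS S x) := by
  induction c with
  | zero => simp
  | succ c ih =>
    have heq : s + (c + 1) * x = (s + c * x) + x := by ring
    rw [heq]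
    have h2 := ord_add_le h (add_smul_mem h.2.1 hs hx c) hx
    nlinarith
end NSAux
namespace NSAux

lemma zmem_natCast {N : Set ℕ} {n : ℕ} : zmem N (n : ℤ) ↔ n ∈ N := by
  constructor
  · rintro ⟨t, ht, hteq⟩
    have : t = n := by exact_mod_cast hteq
    exact this ▸ ht
  · intro h
    exact ⟨n, h, rfl⟩

lemma not_zmem_neg {N : Set ℕ} {z : ℤ} (hz : z < 0) : ¬ zmem N z := by
  rintro ⟨t, _, rfl⟩
  omega

lemma zmem_of_conductor {N : Set ℕ} {c : ℕ} (hc : ∀ v, c ≤ v → v ∈ N)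
    {z : ℤ} (hz : (c : ℤ) ≤ z) : zmem N z := by
  have hz0 : 0 ≤ z := le_trans (by positivity) hz
  refine ⟨z.toNat, hc _ ?_, by simp [hz0]⟩
  omega

lemma Frob_isGreatest {N : Set ℕ} {c : ℕ} (hc : ∀ v, c ≤ v → v ∈ N) :
    IsGreatest {z : ℤ | ¬ zmem N z} (Frob N) := by
  have hbdd : ∃ b : ℤ, ∀ z : ℤ, ¬ zmem N z → z ≤ b := by
    refine ⟨c, fun z hz => ?_⟩
    by_contra hzc
    push_neg at hzc
    exact hz (zmem_of_conductor hc (le_of_lt hzc))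
  have hinh : ∃ z : ℤ, ¬ zmem N z := ⟨-1, not_zmem_neg (by omega)⟩
  obtain ⟨F, hF1, hF2⟩ := Int.exists_greatest_of_bdd hbdd hinh
  have hgr : IsGreatest {z : ℤ | ¬ zmem N z} F := ⟨hF1, fun z hz => hF2 z hz⟩
  have : Frob N = F := hgr.csSup_eq
  rw [this]
  exact hgr

lemma not_zmem_Frob {N : Set ℕ} {c : ℕ} (hc : ∀ v, c ≤ v → v ∈ N) :
    ¬ zmem N (Frob N) := (Frob_isGreatest hc).1

lemma le_Frob {N : Set ℕ} {c : ℕ} (hc : ∀ v, c ≤ v → v ∈ N)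
    {z : ℤ} (hz : ¬ zmem N z) : z ≤ Frob N := (Frob_isGreatest hc).2 hz

lemma zmem_of_Frob_lt {N : Set ℕ} {c : ℕ} (hc : ∀ v, c ≤ v → v ∈ N)
    {z : ℤ} (hz : Frob N < z) : zmem N z := by
  by_contra hn
  exact absurd (le_Frob hc hn) (not_le.2 hz)

lemma neg_one_le_Frob {N : Set ℕ} {c : ℕ} (hc : ∀ v, c ≤ v → v ∈ N) :
    -1 ≤ Frob N := le_Frob hc (not_zmem_neg (by omega))

/-- the maximal element of the Apéry set is `F + x`. -/
lemma Ap_le_Frob_add {N : Set ℕ} {c : ℕ} (hc : ∀ v, c ≤ v → v ∈ N)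
    {x b : ℕ} (hb : b ∈ Ap N x) : (b : ℤ) ≤ Frob N + x := by
  by_cases hbx : x ≤ b
  · have hnot : ¬ zmem N ((b : ℤ) - x) := by
      rintro ⟨t, htN, hteq⟩
      exact hb.2 ⟨t, htN, by omega⟩
    have := le_Frob hc hnot
    omega
  · have := neg_one_le_Frob hc
    omega

lemma Frob_add_mem_Ap {N : Set ℕ} {c : ℕ} (hc : ∀ v, c ≤ v → v ∈ N)
    {x : ℕ} (hx : x ∈ N) (hx0 : x ≠ 0) :
    ∃ w : ℕ, (w : ℤ) = Frob N + x ∧ w ∈ Ap N x := by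
  have h1 : (0 : ℤ) ≤ Frob N + x := by
    have := neg_one_le_Frob hc
    omega
  refine ⟨(Frob N + x).toNat, by omega, ?_, ?_⟩
  · have hz : zmem N ((Frob N + x).toNat : ℤ) := by
      have : Frob N < ((Frob N + x).toNat : ℤ) := by omega
      exact zmem_of_Frob_lt hc this
    exact zmem_natCast.1 hz
  · rintro ⟨t, htN, hteq⟩
    have : zmem N (Frob N) := ⟨t, htN, by omega⟩
    exact not_zmem_Frob hc this

lemma zero_mem_Ap {N : Set ℕ} (h0 : 0 ∈ N) {x : ℕ} (hx0 : x ≠ 0) : 0 ∈ Ap N x :=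
  ⟨h0, by rintro ⟨t, _, ht⟩; omega⟩

end NSAux
namespace NSAux

lemma S₁_num (G : Gluing) : IsNumSgp G.S₁ := G.hnum₁

lemma S₂_num (G : Gluing) : IsNumSgp G.S₂ := G.hnum₂

lemma S₁_zero (G : Gluing) : 0 ∈ G.S₁ := (S₁_num G).1
lemma S₂_zero (G : Gluing) : 0 ∈ G.S₂ := (S₂_num G).1
lemma S₁_add (G : Gluing) : ∀ a ∈ G.S₁, ∀ b ∈ G.S₁, a + b ∈ G.S₁ := (S₁_num G).2.1
lemma S₂_add (G : Gluing) : ∀ a ∈ G.S₂, ∀ b ∈ G.S₂, a + b ∈ G.S₂ := (S₂_num G).2.1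

lemma S_zero (G : Gluing) : 0 ∈ G.S := by
  exact AddSubmonoid.zero_mem _

lemma S_add (G : Gluing) : ∀ a ∈ G.S, ∀ b ∈ G.S, a + b ∈ G.S := by
  intro a ha b hb
  exact AddSubmonoid.add_mem _ ha hb

lemma p_mem (G : Gluing) : G.p ∈ G.S₁ := G.hp
lemma q_mem (G : Gluing) : G.q ∈ G.S₂ := G.hq

lemma q_smul_mem (G : Gluing) {a : ℕ} (ha : a ∈ G.S₁) : G.q * a ∈ G.S := by
  have ha' : a ∈ AddSubmonoid.closure (Set.range G.m) := ha
  refine AddSubmonoid.closure_induction (motive := fun x _ => G.q * x ∈ G.S)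
    (fun x hxr => AddSubmonoid.subset_closure (Or.inl ⟨x, hxr, rfl⟩))
    (by simpa using S_zero G)
    (fun x y _ _ ihx ihy => by
      show G.q * (x + y) ∈ G.S
      have h2 : G.q * (x + y) = G.q * x + G.q * y := by ring
      rw [h2]
      exact S_add G _ ihx _ ihy) ha' 

lemma p_smul_mem (G : Gluing) {b : ℕ} (hb : b ∈ G.S₂) : G.p * b ∈ G.S := by
  have hb' : b ∈ AddSubmonoid.closure (Set.range G.n) := hb
  refine AddSubmonoid.closure_induction (motive := fun x _ => G.p * x ∈ G.S)
    (fun x hxr => AddSubmonoid.subset_closure (Or.inr ⟨x, hxr, rfl⟩))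
    (by simpa using S_zero G)
    (fun x y _ _ ihx ihy => by
      show G.p * (x + y) ∈ G.S
      have h2 : G.p * (x + y) = G.p * x + G.p * y := by ring
      rw [h2]
      exact S_add G _ ihx _ ihy) hb' 

lemma rep_exists (G : Gluing) {s : ℕ} (hs : s ∈ G.S) :
    ∃ a ∈ G.S₁, ∃ b ∈ G.S₂, s = G.q * a + G.p * b := by
  have hs' : s ∈ AddSubmonoid.closure
      ((fun x => G.q * x) '' Set.range G.m ∪ (fun x => G.p * x) '' Set.range G.n) := hs
  refine AddSubmonoid.closure_induction
    (motive := fun x _ => ∃ a ∈ G.S₁, ∃ b ∈ G.S₂, x = G.q * a + G.p * b)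
    (fun x hxr => ?_) ⟨0, S₁_zero G, 0, S₂_zero G, by ring⟩
    (fun x y _ _ ihx ihy => ?_) hs'
  · rcases hxr with ⟨y, hy, rfl⟩ | ⟨y, hy, rfl⟩
    · exact ⟨y, AddSubmonoid.subset_closure hy, 0, S₂_zero G, by ring⟩
    · exact ⟨0, S₁_zero G, y, AddSubmonoid.subset_closure hy, by ring⟩
  · obtain ⟨a, ha, b, hb, hx⟩ := ihx
    obtain ⟨a', ha', b', hb', hy⟩ := ihy
    exact ⟨a + a', S₁_add G _ ha _ ha', b + b', S₂_add G _ hb _ hb', by rw [hx, hy]; ring⟩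

lemma one_mem_of_one_mem_closure {X : Set ℕ} (h : (1 : ℕ) ∈ AddSubmonoid.closure X) :
    (1 : ℕ) ∈ X := by
  have := AddSubmonoid.closure_induction (motive := fun x _ => x = 1 → 1 ∈ X)
    (fun x hxr hx1 => hx1 ▸ hxr) (fun h01 => absurd h01 (by omega))
    (fun x y _ _ ihx ihy hxy => by
      have : x = 1 ∨ y = 1 := by omega
      rcases this with h1 | h1
      · exact ihx h1
      · exact ihy h1) h
  exact this rfl

lemma two_le_q (G : Gluing) : 2 ≤ G.q := by
  by_contra h
  push_neg at h
  have : G.q = 0 ∨ G.q = 1 := by omega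
  rcases this with hq | hq
  · have hp1 : G.p = 1 := by
      have := G.hpq
      rw [hq] at this
      simpa using this
    have h1 : (1:ℕ) ∈ AddSubmonoid.closure (Set.range G.m) := hp1 ▸ G.hp
    exact G.hpm (hp1 ▸ one_mem_of_one_mem_closure h1)
  · have h1 : (1:ℕ) ∈ AddSubmonoid.closure (Set.range G.n) := hq ▸ G.hq
    exact G.hqn (hq ▸ one_mem_of_one_mem_closure h1)

lemma two_le_p (G : Gluing) : 2 ≤ G.p := by
  by_contra h
  push_neg at h
  have : G.p = 0 ∨ G.p = 1 := by omega
  rcases this with hp | hp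
  · have hq1 : G.q = 1 := by
      have := G.hpq
      rw [hp] at this
      simpa using this
    have h1 : (1:ℕ) ∈ AddSubmonoid.closure (Set.range G.n) := hq1 ▸ G.hq
    exact G.hqn (hq1 ▸ one_mem_of_one_mem_closure h1)
  · have h1 : (1:ℕ) ∈ AddSubmonoid.closure (Set.range G.m) := hp ▸ G.hp
    exact G.hpm (hp ▸ one_mem_of_one_mem_closure h1)

end NSAux
namespace NSAux

lemma reduce_b (G : Gluing) : ∀ b a : ℕ, a ∈ G.S₁ → b ∈ G.S₂ →
    ∃ a' ∈ G.S₁, ∃ b' ∈ Ap G.S₂ G.q, G.q * a + G.p * b = G.q * a' + G.p * b' := by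
  intro b
  induction b using Nat.strong_induction_on with
  | _ b ih =>
    intro a ha hb
    by_cases hb' : ∃ t ∈ G.S₂, b = t + G.q
    · obtain ⟨t, ht, rfl⟩ := hb'
      have htb : t < t + G.q := by have := two_le_q G; omega
      obtain ⟨a', ha', b', hb', heq⟩ := ih t htb (a + G.p) (S₁_add G _ ha _ (p_mem G)) ht
      refine ⟨a', ha', b', hb', ?_⟩
      rw [← heq]; ring
    · exact ⟨a, ha, b, ⟨hb, hb'⟩, rfl⟩

lemma rep_Ap (G : Gluing) {s : ℕ} (hs : s ∈ G.S) :
    ∃ a ∈ G.S₁, ∃ b ∈ Ap G.S₂ G.q, s = G.q * a + G.p * b := by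
  obtain ⟨a, ha, b, hb, rfl⟩ := rep_exists G hs
  obtain ⟨a', ha', b', hb', heq⟩ := reduce_b G b a ha hb
  exact ⟨a', ha', b', hb', heq⟩

lemma coprime_qp (G : Gluing) : IsCoprime (G.q : ℤ) (G.p : ℤ) :=
  Nat.isCoprime_iff_coprime.2 (Nat.Coprime.symm G.hpq)

lemma coprime_pq (G : Gluing) : IsCoprime (G.p : ℤ) (G.q : ℤ) :=
  Nat.isCoprime_iff_coprime.2 G.hpq

lemma q_int_pos (G : Gluing) : (0 : ℤ) < G.q := by
  have := two_le_q G; exact_mod_cast by omega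
lemma p_int_pos (G : Gluing) : (0 : ℤ) < G.p := by
  have := two_le_p G; exact_mod_cast by omega

/-- from `b' = b + q c` with `c ≥ 1` and `b ∈ S₂` conclude `b' ∉ Ap S₂ q`. -/
lemma not_Ap_of_shift (G : Gluing) {b b' : ℕ} (hb : b ∈ G.S₂) {c : ℤ} (hc : 0 < c)
    (heq : (b' : ℤ) = b + G.q * c) : b' ∉ Ap G.S₂ G.q := by
  intro hb'
  set cn := c.toNat with hcn
  have hcn1 : 1 ≤ cn := by omega
  have hbn : b' = b + G.q * cn := by
    have h5 : (cn : ℤ) = c := by omega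
    have h6 : (b' : ℤ) = ((b + G.q * cn : ℕ) : ℤ) := by push_cast; rw [h5]; linarith
    exact_mod_cast h6
  have ht : b + G.q * (cn - 1) ∈ G.S₂ := by
    have := add_smul_mem (S₂_add G) hb (q_mem G) (cn - 1)
    rwa [mul_comm] at this
  refine hb'.2 ⟨b + G.q * (cn - 1), ht, ?_⟩
  have h2 : G.q * cn = G.q * (cn - 1) + G.q := by
    conv_lhs => rw [← Nat.sub_add_cancel hcn1]
    ring
  omega

lemma rep_unique (G : Gluing) {a a' : ℤ} {b b' : ℕ}
    (hb : b ∈ Ap G.S₂ G.q) (hb' : b' ∈ Ap G.S₂ G.q)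
    (heq : (G.q : ℤ) * a + G.p * b = G.q * a' + G.p * b') : a = a' ∧ b = b' := by
  have hdvd : (G.q : ℤ) ∣ ((G.p : ℤ) * ((b' : ℤ) - b)) := ⟨a - a', by linarith⟩
  have hdvd2 : (G.q : ℤ) ∣ ((b' : ℤ) - b) := (coprime_qp G).dvd_of_dvd_mul_left hdvd
  obtain ⟨c, hc⟩ := hdvd2
  rcases lt_trichotomy c 0 with hcs | hcs | hcs
  · exact absurd hb (not_Ap_of_shift G hb'.1 (c := -c) (by omega)
      (by push_cast; linarith))
  · have hbb : b = b' := by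
      have : (b : ℤ) = b' := by rw [hcs] at hc; omega
      exact_mod_cast this
    subst hbb
    have hq0 : (G.q : ℤ) ≠ 0 := by have := q_int_pos G; omega
    exact ⟨mul_left_cancel₀ hq0 (by linarith), rfl⟩
  · exact absurd hb' (not_Ap_of_shift G hb.1 hcs (by push_cast; linarith))

lemma zmem_left (G : Gluing) {b : ℕ} (hb : b ∈ Ap G.S₂ G.q) (z : ℤ) :
    zmem G.S ((G.q : ℤ) * z + G.p * b) ↔ zmem G.S₁ z := by
  constructor
  · rintro ⟨s, hsS, hseq⟩
    obtain ⟨a', ha', b', hb', rfl⟩ := rep_Ap G hsS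
    have hcast : (G.q : ℤ) * z + G.p * b = G.q * a' + G.p * b' := by
      push_cast at hseq ⊢
      linarith
    obtain ⟨hza, _⟩ := rep_unique G hb hb' hcast
    exact ⟨a', ha', hza.symm⟩
  · rintro ⟨a, ha, rfl⟩
    refine ⟨G.q * a + G.p * b, S_add G _ (q_smul_mem G ha) _ (p_smul_mem G hb.1), by push_cast; ring⟩

lemma zmem_right (G : Gluing) {a : ℕ} (ha : a ∈ Ap G.S₁ G.p) (z : ℤ) :
    zmem G.S ((G.q : ℤ) * a + G.p * z) ↔ zmem G.S₂ z := by
  constructor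
  · rintro ⟨s, hsS, hseq⟩
    obtain ⟨A, hA, B, hB, rfl⟩ := rep_Ap G hsS
    have hcast : (G.q : ℤ) * a + G.p * z = G.q * A + G.p * B := by
      push_cast at hseq ⊢
      linarith
    have hdvd : (G.p : ℤ) ∣ ((G.q : ℤ) * ((a : ℤ) - A)) := ⟨(B : ℤ) - z, by linarith⟩
    have hdvd2 : (G.p : ℤ) ∣ ((a : ℤ) - A) := (coprime_pq G).dvd_of_dvd_mul_left hdvd
    obtain ⟨c, hc⟩ := hdvd2
    have hBz : (B : ℤ) - z = G.q * c := by
      have hp0 : (G.p : ℤ) ≠ 0 := by have := p_int_pos G; omega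
      have h3 : (G.p : ℤ) * ((B : ℤ) - z) = (G.p : ℤ) * ((G.q : ℤ) * c) := by
        rw [← mul_assoc, mul_comm (G.p : ℤ) (G.q : ℤ), mul_assoc, ← hc]
        linarith
      exact mul_left_cancel₀ hp0 h3
    rcases le_or_gt c 0 with hcs | hcs
    · have hz : z = (B : ℤ) + G.q * (-c) := by linarith
      refine ⟨B + G.q * (-c).toNat, ?_, ?_⟩
      · have := add_smul_mem (S₂_add G) hB.1 (q_mem G) ((-c).toNat)
        rwa [mul_comm] at this
      · have h5 : (((-c).toNat : ℤ)) = -c := by omega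
        push_cast
        rw [h5]
        linarith
    · exfalso
      have hcn1 : 1 ≤ c.toNat := by omega
      have han : a = A + G.p * c.toNat := by
        have : (c.toNat : ℤ) = c := by omega
        have h4 : (a : ℤ) = A + G.p * c.toNat := by rw [this]; linarith
        exact_mod_cast h4
      refine ha.2 ⟨A + G.p * (c.toNat - 1), by
        have := add_smul_mem (S₁_add G) hA (p_mem G) (c.toNat - 1)
        rwa [mul_comm] at this, ?_⟩
      have h2 : G.p * c.toNat = G.p * (c.toNat - 1) + G.p := by
        conv_lhs => rw [← Nat.sub_add_cancel hcn1]
        ring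
      omega
  · rintro ⟨t, ht, rfl⟩
    refine ⟨G.q * a + G.p * t, S_add G _ (q_smul_mem G ha.1) _ (p_smul_mem G ht), by push_cast; ring⟩

end NSAux
namespace NSAux

lemma exists_res (G : Gluing) (z : ℤ) :
    ∃ b ∈ Ap G.S₂ G.q, ∃ a : ℤ, z = G.q * a + G.p * b := by
  obtain ⟨c₂, hc₂⟩ := exists_conductor (S₂_num G)
  -- Bezout
  have hbez : (1 : ℤ) = G.p * Nat.gcdA G.p G.q + G.q * Nat.gcdB G.p G.q := by
    have := Nat.gcd_eq_gcd_ab G.p G.q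
    rw [G.hpq] at this
    exact_mod_cast this
  set u := Nat.gcdA G.p G.q with hu
  set v := Nat.gcdB G.p G.q with hv
  have hq0 : (G.q : ℤ) ≠ 0 := by have := q_int_pos G; omega
  have hqpos : (0 : ℤ) < G.q := q_int_pos G
  set w : ℤ := u * z with hw
  have hdvd1 : (G.q : ℤ) ∣ z - G.p * w := ⟨z * v, by rw [hw]; linear_combination z * hbez⟩
  set n : ℕ := (w % (G.q : ℤ)).toNat with hn
  have hnw : (n : ℤ) = w % (G.q : ℤ) := Int.toNat_of_nonneg (Int.emod_nonneg w hq0)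
  have hdvd2 : (G.q : ℤ) ∣ w - n := by
    rw [hnw]
    exact Int.dvd_self_sub_of_emod_eq rfl
  -- minimal element of S₂ in the residue class of n
  have hPne : ∃ t : ℕ, t ∈ G.S₂ ∧ t % G.q = n % G.q := by
    refine ⟨n + G.q * c₂, hc₂ _ ?_, Nat.add_mul_mod_self_left n G.q c₂⟩
    have := two_le_q G
    nlinarith
  set b := sInf {t : ℕ | t ∈ G.S₂ ∧ t % G.q = n % G.q} with hbdef
  obtain ⟨hbS, hbmod⟩ := Nat.sInf_mem hPne
  have hbAp : b ∈ Ap G.S₂ G.q := by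
    refine ⟨hbS, ?_⟩
    rintro ⟨t, ht, hteq⟩
    have htmod : t % G.q = n % G.q := by
      have h7 : (t + G.q) % G.q = t % G.q := Nat.add_mod_right t G.q
      have h8 : b % G.q = n % G.q := hbmod
      rw [← hteq] at h7
      omega
    have hle : b ≤ t := Nat.sInf_le ⟨ht, htmod⟩
    have := two_le_q G
    omega
  have hdvd3 : (G.q : ℤ) ∣ (n : ℤ) - b := by
    have : Nat.ModEq G.q b n := hbmod
    exact this.dvd
  have hdvd4 : (G.q : ℤ) ∣ z - G.p * b := by
    have : z - G.p * b = (z - G.p * w) + G.p * (w - n) + G.p * ((n : ℤ) - b) := by ring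
    rw [this]
    exact dvd_add (dvd_add hdvd1 (Dvd.dvd.mul_left hdvd2 _)) (Dvd.dvd.mul_left hdvd3 _)
  obtain ⟨a, ha⟩ := hdvd4
  exact ⟨b, hbAp, a, by linarith⟩

lemma FrobS_isGreatest (G : Gluing) :
    IsGreatest {z : ℤ | ¬ zmem G.S z}
      ((G.q : ℤ) * Frob G.S₁ + G.p * Frob G.S₂ + G.p * G.q) := by
  obtain ⟨c₁, hc₁⟩ := exists_conductor (S₁_num G)
  obtain ⟨c₂, hc₂⟩ := exists_conductor (S₂_num G)
  have hq0 : G.q ≠ 0 := by have := two_le_q G; omega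
  obtain ⟨w₂, hw₂val, hw₂Ap⟩ := Frob_add_mem_Ap hc₂ (q_mem G) hq0
  have hF'eq : (G.q : ℤ) * Frob G.S₁ + G.p * Frob G.S₂ + G.p * G.q =
      (G.q : ℤ) * Frob G.S₁ + G.p * w₂ := by rw [hw₂val]; ring
  constructor
  · show ¬ zmem G.S _
    rw [hF'eq]
    rw [zmem_left G hw₂Ap]
    exact not_zmem_Frob hc₁
  · intro z hz
    by_contra hzgt
    push_neg at hzgt
    obtain ⟨b, hb, a, rfl⟩ := exists_res G z
    have hble : (b : ℤ) ≤ Frob G.S₂ + G.q := Ap_le_Frob_add hc₂ hb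
    have ha1 : (G.q : ℤ) * Frob G.S₁ < G.q * a := by
      have hppos := p_int_pos G
      nlinarith
    have ha2 : Frob G.S₁ < a := lt_of_mul_lt_mul_left ha1 (by positivity)
    have hzm : zmem G.S₁ a := zmem_of_Frob_lt hc₁ ha2
    exact hz ((zmem_left G hb a).2 hzm)

lemma FrobS_eq (G : Gluing) :
    Frob G.S = (G.q : ℤ) * Frob G.S₁ + G.p * Frob G.S₂ + G.p * G.q :=
  (FrobS_isGreatest G).csSup_eq

lemma not_zmem_FrobS (G : Gluing) : ¬ zmem G.S (Frob G.S) := by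
  rw [FrobS_eq G]; exact (FrobS_isGreatest G).1

lemma le_FrobS (G : Gluing) {z : ℤ} (hz : ¬ zmem G.S z) : z ≤ Frob G.S := by
  rw [FrobS_eq G]; exact (FrobS_isGreatest G).2 hz

lemma sym_fwd₁ (G : Gluing) (hS : IsSymmetric G.S) : IsSymmetric G.S₁ := by
  obtain ⟨c₂, hc₂⟩ := exists_conductor (S₂_num G)
  have hq0 : G.q ≠ 0 := by have := two_le_q G; omega
  obtain ⟨w₂, hw₂val, hw₂Ap⟩ := Frob_add_mem_Ap hc₂ (q_mem G) hq0
  intro z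
  have h0Ap : (0 : ℕ) ∈ Ap G.S₂ G.q := zero_mem_Ap (S₂_zero G) hq0
  have h1 : zmem G.S₁ z ↔ zmem G.S ((G.q : ℤ) * z + G.p * 0) := (zmem_left G h0Ap z).symm
  have h2 := hS ((G.q : ℤ) * z + G.p * 0)
  have h3 : Frob G.S - ((G.q : ℤ) * z + G.p * 0) =
      (G.q : ℤ) * (Frob G.S₁ - z) + G.p * w₂ := by
    rw [FrobS_eq G, hw₂val]; ring
  rw [h3] at h2
  rw [h1, h2, zmem_left G hw₂Ap]

lemma sym_fwd₂ (G : Gluing) (hS : IsSymmetric G.S) : IsSymmetric G.S₂ := by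
  obtain ⟨c₁, hc₁⟩ := exists_conductor (S₁_num G)
  have hp0 : G.p ≠ 0 := by have := two_le_p G; omega
  obtain ⟨w₁, hw₁val, hw₁Ap⟩ := Frob_add_mem_Ap hc₁ (p_mem G) hp0
  intro z
  have h0Ap : (0 : ℕ) ∈ Ap G.S₁ G.p := zero_mem_Ap (S₁_zero G) hp0
  have h1 : zmem G.S₂ z ↔ zmem G.S ((G.q : ℤ) * 0 + G.p * z) := (zmem_right G h0Ap z).symm
  have h2 := hS ((G.q : ℤ) * 0 + G.p * z)
  have h3 : Frob G.S - ((G.q : ℤ) * 0 + G.p * z) =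
      (G.q : ℤ) * w₁ + G.p * (Frob G.S₂ - z) := by
    rw [FrobS_eq G, hw₁val]; ring
  rw [h3] at h2
  rw [h1, h2, zmem_right G hw₁Ap]

/-- for a symmetric numerical semigroup, `F + x - b ∈ Ap` whenever `b ∈ Ap`. -/
lemma Ap_invol {N : Set ℕ} {c : ℕ} (hc : ∀ v, c ≤ v → v ∈ N)
    (hsym : IsSymmetric N) {x b : ℕ} (hb : b ∈ Ap N x) :
    ∃ b' : ℕ, (b' : ℤ) = Frob N + x - b ∧ b' ∈ Ap N x := by
  have hble : (b : ℤ) ≤ Frob N + x := Ap_le_Frob_add hc hb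
  refine ⟨(Frob N + x - b).toNat, by omega, ?_, ?_⟩
  · -- membership in N
    have hnb : ¬ zmem N ((b : ℤ) - x) := by
      by_cases hbx : (x : ℕ) ≤ b
      · rintro ⟨t, htN, hteq⟩
        exact hb.2 ⟨t, htN, by omega⟩
      · exact not_zmem_neg (by omega)
    have hzm : zmem N (Frob N + x - b) := by
      have h9 := hsym ((b : ℤ) - x)
      have h10 : zmem N (Frob N - ((b : ℤ) - x)) := by
        by_contra hcon
        exact hnb (h9.2 hcon)
      have h11 : Frob N - ((b : ℤ) - x) = Frob N + x - b := by ring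
      rwa [h11] at h10
    obtain ⟨t, htN, hteq⟩ := hzm
    have : t = (Frob N + x - b).toNat := by omega
    exact this ▸ htN
  · rintro ⟨t, htN, hteq⟩
    have htz : (t : ℤ) = Frob N - b := by omega
    have h1 : zmem N (Frob N - b) := ⟨t, htN, htz⟩
    have h2 : zmem N b := ⟨b, hb.1, rfl⟩
    exact ((hsym (b : ℤ)).1 h2) h1

lemma sym_back (G : Gluing) (h1 : IsSymmetric G.S₁) (h2 : IsSymmetric G.S₂) :
    IsSymmetric G.S := by
  obtain ⟨c₁, hc₁⟩ := exists_conductor (S₁_num G)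
  obtain ⟨c₂, hc₂⟩ := exists_conductor (S₂_num G)
  intro Z
  obtain ⟨b, hb, a, rfl⟩ := exists_res G Z
  obtain ⟨b', hb'val, hb'Ap⟩ := Ap_invol hc₂ h2 hb
  have h3 : Frob G.S - ((G.q : ℤ) * a + G.p * b) =
      (G.q : ℤ) * (Frob G.S₁ - a) + G.p * b' := by
    rw [FrobS_eq G, hb'val]; ring
  rw [h3, zmem_left G hb a, zmem_left G hb'Ap]
  exact h1 a

end NSAux
namespace NSAux

lemma ord_add_smul_ge {S : Set ℕ} (hadd : ∀ a ∈ S, ∀ b ∈ S, a + b ∈ S) {s x : ℕ}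
    (hs : s ∈ S) (hx : x ∈ S) (c : ℕ) :
    ordS S s + c * ordS S x ≤ ordS S (s + c * x) := by
  induction c with
  | zero => simp
  | succ c ih =>
    have heq : s + (c + 1) * x = (s + c * x) + x := by ring
    rw [heq]
    have h2 := ordS_superadd hadd (add_smul_mem hadd hs hx c) hx
    nlinarith

lemma q_smul_mem_nM (G : Gluing) {t a : ℕ} (ha : a ∈ nM G.S₁ t) :
    G.q * a ∈ nM G.S t := by
  induction t generalizing a with
  | zero => exact q_smul_mem G ha
  | succ t ih =>
    obtain ⟨g, hg, y, hy, rfl⟩ := mem_nM_succ.1 ha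
    refine mem_nM_succ.2 ⟨G.q * g, ⟨q_smul_mem G hg.1, ?_⟩, G.q * y, ih hy, by ring⟩
    have hq := two_le_q G
    have hg0 : g ≠ 0 := by simpa using hg.2
    simp only [Set.mem_singleton_iff]
    positivity

lemma p_smul_mem_nM (G : Gluing) {t b : ℕ} (hb : b ∈ nM G.S₂ t) :
    G.p * b ∈ nM G.S t := by
  induction t generalizing b with
  | zero => exact p_smul_mem G hb
  | succ t ih =>
    obtain ⟨g, hg, y, hy, rfl⟩ := mem_nM_succ.1 hb
    refine mem_nM_succ.2 ⟨G.p * g, ⟨p_smul_mem G hg.1, ?_⟩, G.p * y, ih hy, by ring⟩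
    have hp := two_le_p G
    have hg0 : g ≠ 0 := by simpa using hg.2
    simp only [Set.mem_singleton_iff]
    positivity

lemma split_nM (G : Gluing) : ∀ L s, s ∈ nM G.S L →
    ∃ A ∈ G.S₁, ∃ B ∈ G.S₂, s = G.q * A + G.p * B ∧
      L ≤ ordS G.S₁ A + ordS G.S₂ B := by
  intro L
  induction L with
  | zero =>
    intro s hs
    obtain ⟨A, hA, B, hB, rfl⟩ := rep_exists G hs
    exact ⟨A, hA, B, hB, rfl, by omega⟩
  | succ L ih =>
    intro s hs
    obtain ⟨g, hg, y, hy, rfl⟩ := mem_nM_succ.1 hs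
    obtain ⟨α, hα, β, hβ, rfl⟩ := rep_exists G hg.1
    obtain ⟨A, hA, B, hB, hyeq, hyord⟩ := ih y hy
    have hg0 : G.q * α + G.p * β ≠ 0 := by simpa using hg.2
    have hord1 : 1 ≤ ordS G.S₁ α + ordS G.S₂ β := by
      have hq := two_le_q G
      have hp := two_le_p G
      rcases Nat.eq_zero_or_pos α with hα0 | hα0
      · rcases Nat.eq_zero_or_pos β with hβ0 | hβ0
        · exfalso; apply hg0; rw [hα0, hβ0]; ring
        · have := one_le_ordS (S₂_zero G) hβ (by omega)
          omega
      · have := one_le_ordS (S₁_zero G) hα (by omega)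
        omega
    refine ⟨α + A, S₁_add G _ hα _ hA, β + B, S₂_add G _ hβ _ hB, by rw [hyeq]; ring, ?_⟩
    have h1 := ordS_superadd (S₁_add G) hα hA
    have h2 := ordS_superadd (S₂_add G) hβ hB
    omega

lemma rep_shift (G : Gluing) {a b A B : ℕ} (hb : b ∈ Ap G.S₂ G.q) (hB : B ∈ G.S₂)
    (heq : G.q * a + G.p * b = G.q * A + G.p * B) :
    ∃ c : ℕ, B = b + c * G.q ∧ a = A + c * G.p := by
  have hZ : (G.q : ℤ) * a + G.p * b = G.q * A + G.p * B := by exact_mod_cast heq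
  have hdvd : (G.q : ℤ) ∣ (G.p : ℤ) * ((B : ℤ) - b) := ⟨(a : ℤ) - A, by linarith⟩
  obtain ⟨c, hc⟩ := (coprime_qp G).dvd_of_dvd_mul_left hdvd
  have hc0 : 0 ≤ c := by
    by_contra hcn
    push_neg at hcn
    exact absurd hb (not_Ap_of_shift G hB (c := -c) (by omega) (by push_cast; linarith))
  have haA : (a : ℤ) = A + c * G.p := by
    have hq0 : (G.q : ℤ) ≠ 0 := by have := q_int_pos G; omega
    have h3 : (G.q : ℤ) * a = G.q * (A + c * G.p) := by linear_combination hZ + (G.p : ℤ) * hc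
    exact mul_left_cancel₀ hq0 h3
  have hct : ((c.toNat : ℤ)) = c := by omega
  refine ⟨c.toNat, ?_, ?_⟩
  · have h5 : (B : ℤ) = b + c.toNat * G.q := by push_cast; rw [hct]; linarith
    exact_mod_cast h5
  · have h5 : (a : ℤ) = A + c.toNat * G.p := by push_cast; rw [hct]; linarith
    exact_mod_cast h5

lemma rep_ord_le (G : Gluing) (hG : G.Specific) {a b A B : ℕ}
    (ha : a ∈ G.S₁) (hb : b ∈ Ap G.S₂ G.q) (hA : A ∈ G.S₁) (hB : B ∈ G.S₂)
    (heq : G.q * a + G.p * b = G.q * A + G.p * B) :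
    ordS G.S₁ A + ordS G.S₂ B ≤ ordS G.S₁ a + ordS G.S₂ b := by
  obtain ⟨c, hBeq, haeq⟩ := rep_shift G hb hB heq
  have h1 : ordS G.S₂ B ≤ ordS G.S₂ b + c * (ordS G.S₂ G.q + lS G.S₂ G.q) := by
    rw [hBeq]
    exact ord_add_smul_le (S₂_num G) hb.1 (q_mem G) c
  have h2 : ordS G.S₁ A + c * ordS G.S₁ G.p ≤ ordS G.S₁ a := by
    rw [haeq]
    exact ord_add_smul_ge (S₁_add G) hA (p_mem G) c
  have h3 : c * (ordS G.S₂ G.q + lS G.S₂ G.q) ≤ c * ordS G.S₁ G.p :=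
    Nat.mul_le_mul_left c hG
  omega

lemma ordS_glue (G : Gluing) (hG : G.Specific) {a b : ℕ}
    (ha : a ∈ G.S₁) (hb : b ∈ Ap G.S₂ G.q) :
    ordS G.S (G.q * a + G.p * b) = ordS G.S₁ a + ordS G.S₂ b := by
  refine le_antisymm ?_ ?_
  · have hmem : G.q * a + G.p * b ∈ G.S :=
      S_add G _ (q_smul_mem G ha) _ (p_smul_mem G hb.1)
    obtain ⟨A, hA, B, hB, heq, hord⟩ :=
      split_nM G (ordS G.S (G.q * a + G.p * b)) _ (mem_nM_ordS hmem)
    exact le_trans hord (rep_ord_le G hG ha hb hA hB heq)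
  · exact le_ordS_of_mem (add_mem_nM (S_add G)
      (q_smul_mem_nM G (mem_nM_ordS ha)) (p_smul_mem_nM G (mem_nM_ordS hb.1)))

lemma Ap_glue (G : Gluing) {x : ℕ} (hx : x ∈ G.S₁) {s : ℕ} :
    s ∈ Ap G.S (G.q * x) ↔
      ∃ a ∈ Ap G.S₁ x, ∃ b ∈ Ap G.S₂ G.q, s = G.q * a + G.p * b := by
  constructor
  · rintro ⟨hsS, hs2⟩
    obtain ⟨a, ha, b, hb, rfl⟩ := rep_Ap G hsS
    refine ⟨a, ⟨ha, ?_⟩, b, hb, rfl⟩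
    rintro ⟨t, ht, rfl⟩
    exact hs2 ⟨G.q * t + G.p * b, S_add G _ (q_smul_mem G ht) _ (p_smul_mem G hb.1), by ring⟩
  · rintro ⟨a, ha, b, hb, rfl⟩
    refine ⟨S_add G _ (q_smul_mem G ha.1) _ (p_smul_mem G hb.1), ?_⟩
    rintro ⟨T, hT, hTeq⟩
    obtain ⟨A, hA, B, hB, rfl⟩ := rep_Ap G hT
    have heq2 : G.q * a + G.p * b = G.q * (A + x) + G.p * B := by rw [hTeq]; ring
    have := rep_unique G hb hB (a := (a:ℤ)) (a' := ((A + x : ℕ) : ℤ)) (by exact_mod_cast heq2)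
    have haAx : a = A + x := by exact_mod_cast this.1
    exact ha.2 ⟨A, hA, haAx⟩

end NSAux
namespace NSAux

lemma ordS_zero {S : Set ℕ} (h0 : 0 ∈ S) : ordS S 0 = 0 :=
  Nat.le_antisymm (csSup_le ⟨0, h0⟩ fun _ ht => le_of_mem_nM ht) (Nat.zero_le _)

lemma exists_mem_MaxMAp {N : Set ℕ} (h0 : 0 ∈ N) {x : ℕ} (hx0 : x ≠ 0)
    (hbdd : BddAbove (Ap N x)) : ∃ w, w ∈ MaxMAp N x := by
  refine ⟨sSup (Ap N x), Nat.sSup_mem ⟨0, zero_mem_Ap h0 hx0⟩ hbdd, ?_⟩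
  rintro y hy ⟨z, hz, hyeq, _⟩
  have := le_csSup hbdd hy
  omega

lemma Ap_bdd_of_conductor {N : Set ℕ} {c : ℕ} (hc : ∀ v, c ≤ v → v ∈ N) (x : ℕ) :
    BddAbove (Ap N x) := by
  refine ⟨(Frob N + x).toNat, fun b hb => ?_⟩
  have := Ap_le_Frob_add hc hb
  omega

lemma Ap_S_bdd (G : Gluing) (x : ℕ) : BddAbove (Ap G.S x) := by
  refine ⟨(Frob G.S + x).toNat, fun b hb => ?_⟩
  have hm1 : (-1 : ℤ) ≤ Frob G.S := le_FrobS G (not_zmem_neg (by omega))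
  by_cases hbx : x ≤ b
  · have hnot : ¬ zmem G.S ((b : ℤ) - x) := by
      rintro ⟨t, htN, hteq⟩
      exact hb.2 ⟨t, htN, by omega⟩
    have := le_FrobS G hnot
    omega
  · omega

lemma MaxMAp_comp (G : Gluing) (hG : G.Specific) {x : ℕ} (hx : x ∈ G.S₁)
    {a b : ℕ} (ha : a ∈ Ap G.S₁ x) (hb : b ∈ Ap G.S₂ G.q)
    (hmax : G.q * a + G.p * b ∈ MaxMAp G.S (G.q * x)) :
    a ∈ MaxMAp G.S₁ x ∧ b ∈ MaxMAp G.S₂ G.q := by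
  have hq2 := two_le_q G
  have hp2 := two_le_p G
  constructor
  · refine ⟨ha, ?_⟩
    rintro a' ha' ⟨z, hz, ha'eq, hordeq⟩
    have hy : G.q * a' + G.p * b ∈ Ap G.S (G.q * x) :=
      (Ap_glue G hx).2 ⟨a', ha', b, hb, rfl⟩
    have hyeq : G.q * a' + G.p * b = (G.q * a + G.p * b) + G.q * z := by
      rw [ha'eq]; ring
    have hqz : G.q * z ∈ G.S := q_smul_mem G hz
    have hwS : G.q * a + G.p * b ∈ G.S :=
      S_add G _ (q_smul_mem G ha.1) _ (p_smul_mem G hb.1)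
    -- superadditivity forces ord_S (q z) = ord₁ z
    have h1 : ordS G.S (G.q * a' + G.p * b) = ordS G.S₁ a' + ordS G.S₂ b :=
      ordS_glue G hG ha'.1 hb
    have h2 : ordS G.S (G.q * a + G.p * b) = ordS G.S₁ a + ordS G.S₂ b :=
      ordS_glue G hG ha.1 hb
    have h3 : ordS G.S (G.q * a + G.p * b) + ordS G.S (G.q * z) ≤
        ordS G.S (G.q * a' + G.p * b) := by
      rw [hyeq]
      exact ordS_superadd (S_add G) hwS hqz
    have h4 : ordS G.S₁ z ≤ ordS G.S (G.q * z) :=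
      le_ordS_of_mem (q_smul_mem_nM G (mem_nM_ordS hz))
    have h5 : ordS G.S (G.q * z) = ordS G.S₁ z := by omega
    have := hmax.2 _ hy ⟨G.q * z, hqz, hyeq, by omega⟩
    have : G.q * a' = G.q * a := by omega
    exact Nat.eq_of_mul_eq_mul_left (by omega) this
  · refine ⟨hb, ?_⟩
    rintro b' hb' ⟨z, hz, hb'eq, hordeq⟩
    have hy : G.q * a + G.p * b' ∈ Ap G.S (G.q * x) :=
      (Ap_glue G hx).2 ⟨a, ha, b', hb', rfl⟩
    have hyeq : G.q * a + G.p * b' = (G.q * a + G.p * b) + G.p * z := by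
      rw [hb'eq]; ring
    have hpz : G.p * z ∈ G.S := p_smul_mem G hz
    have hwS : G.q * a + G.p * b ∈ G.S :=
      S_add G _ (q_smul_mem G ha.1) _ (p_smul_mem G hb.1)
    have h1 : ordS G.S (G.q * a + G.p * b') = ordS G.S₁ a + ordS G.S₂ b' :=
      ordS_glue G hG ha.1 hb'
    have h2 : ordS G.S (G.q * a + G.p * b) = ordS G.S₁ a + ordS G.S₂ b :=
      ordS_glue G hG ha.1 hb
    have h3 : ordS G.S (G.q * a + G.p * b) + ordS G.S (G.p * z) ≤
        ordS G.S (G.q * a + G.p * b') := by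
      rw [hyeq]
      exact ordS_superadd (S_add G) hwS hpz
    have h4 : ordS G.S₂ z ≤ ordS G.S (G.p * z) :=
      le_ordS_of_mem (p_smul_mem_nM G (mem_nM_ordS hz))
    have := hmax.2 _ hy ⟨G.p * z, hpz, hyeq, by omega⟩
    have : G.p * b' = G.p * b := by omega
    exact Nat.eq_of_mul_eq_mul_left (by omega) this

lemma MaxMAp_glue (G : Gluing) (hG : G.Specific) {x : ℕ} (hx : x ∈ G.S₁)
    {a b : ℕ} (haM : a ∈ MaxMAp G.S₁ x) (hbM : b ∈ MaxMAp G.S₂ G.q) :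
    G.q * a + G.p * b ∈ MaxMAp G.S (G.q * x) := by
  have hq2 := two_le_q G
  have hp2 := two_le_p G
  refine ⟨(Ap_glue G hx).2 ⟨a, haM.1, b, hbM.1, rfl⟩, ?_⟩
  rintro y hy ⟨z, hz, hyeq, hyord⟩
  obtain ⟨a', ha', b', hb', rfl⟩ := (Ap_glue G hx).1 hy
  obtain ⟨α, hα, β, hβ, rfl⟩ := rep_Ap G hz
  have oy : ordS G.S (G.q * a' + G.p * b') = ordS G.S₁ a' + ordS G.S₂ b' :=
    ordS_glue G hG ha'.1 hb'
  have ow : ordS G.S (G.q * a + G.p * b) = ordS G.S₁ a + ordS G.S₂ b :=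
    ordS_glue G hG haM.1.1 hbM.1
  have oz : ordS G.S (G.q * α + G.p * β) = ordS G.S₁ α + ordS G.S₂ β :=
    ordS_glue G hG hα hβ
  have heq2 : G.q * a' + G.p * b' = G.q * (a + α) + G.p * (b + β) := by
    rw [hyeq]; ring
  obtain ⟨c, hc1, hc2⟩ := rep_shift G hb' (S₂_add G _ hbM.1.1 _ hβ.1) heq2
  -- hc1 : b + β = b' + c * G.q ; hc2 : a' = (a + α) + c * G.p
  have h1 : ordS G.S₂ (b' + c * G.q) ≤ ordS G.S₂ b' + c * ordS G.S₁ G.p := by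
    have := ord_add_smul_le (S₂_num G) hb'.1 (q_mem G) c
    have h3 : c * (ordS G.S₂ G.q + lS G.S₂ G.q) ≤ c * ordS G.S₁ G.p :=
      Nat.mul_le_mul_left c hG
    omega
  have h2 : ordS G.S₂ b + ordS G.S₂ β ≤ ordS G.S₂ (b + β) :=
    ordS_superadd (S₂_add G) hbM.1.1 hβ.1
  have h2' : ordS G.S₂ b + ordS G.S₂ β ≤ ordS G.S₂ b' + c * ordS G.S₁ G.p := by
    rw [hc1] at h2
    omega
  have hαcpS : α + c * G.p ∈ G.S₁ := add_smul_mem (S₁_add G) hα (p_mem G) c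
  have h3 : ordS G.S₁ α + c * ordS G.S₁ G.p ≤ ordS G.S₁ (α + c * G.p) :=
    ord_add_smul_ge (S₁_add G) hα (p_mem G) c
  have h4 : ordS G.S₁ a + ordS G.S₁ (α + c * G.p) ≤ ordS G.S₁ a' := by
    have h5 : a' = a + (α + c * G.p) := by omega
    rw [h5]
    exact ordS_superadd (S₁_add G) haM.1.1 hαcpS
  -- from the order equation, everything is tight
  have hordsum : ordS G.S₁ a' + ordS G.S₂ b' =
      ordS G.S₁ a + ordS G.S₂ b + (ordS G.S₁ α + ordS G.S₂ β) := by omega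
  have htight : ordS G.S₁ a' = ordS G.S₁ a + ordS G.S₁ (α + c * G.p) := by omega
  have haa : a' = a := haM.2 a' ha'
    ⟨α + c * G.p, hαcpS, by omega, htight⟩
  rw [haa] at hc2
  -- hc2 : a = a + α + c * G.p
  have hα0 : α = 0 := by omega
  have hc0 : c = 0 := by
    have h6 : c * G.p = 0 := by omega
    rcases Nat.mul_eq_zero.1 h6 with h7 | h7
    · exact h7
    · omega
  rw [hc0] at hc1
  simp only [Nat.zero_mul, Nat.add_zero] at hc1
  have haeq : ordS G.S₁ a' = ordS G.S₁ a := by rw [haa]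
  have hordα : ordS G.S₁ α = 0 := by rw [hα0]; exact ordS_zero (S₁_zero G)
  have hbb : b' = b := hbM.2 b' hb' ⟨β, hβ.1, by omega, by omega⟩
  rw [haa, hbb]

end NSAux
namespace NSAux

lemma MP_glue_iff (G : Gluing) (hG : G.Specific) {x : ℕ} (hx : x ∈ G.S₁) (hx0 : x ≠ 0) :
    MPureWrt G.S (G.q * x) ↔ (MPureWrt G.S₁ x ∧ MPureWrt G.S₂ G.q) := by
  have hq2 := two_le_q G
  have hq0 : G.q ≠ 0 := by omega
  obtain ⟨c₁, hc₁⟩ := exists_conductor (S₁_num G)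
  obtain ⟨c₂, hc₂⟩ := exists_conductor (S₂_num G)
  constructor
  · intro hmp
    constructor
    · intro a haM a' ha'M
      obtain ⟨b₀, hb₀M⟩ := exists_mem_MaxMAp (S₂_zero G) hq0 (Ap_bdd_of_conductor hc₂ G.q)
      have h1 := hmp _ (MaxMAp_glue G hG hx haM hb₀M) _ (MaxMAp_glue G hG hx ha'M hb₀M)
      rw [ordS_glue G hG haM.1.1 hb₀M.1, ordS_glue G hG ha'M.1.1 hb₀M.1] at h1
      omega
    · intro b hbM b' hb'M
      obtain ⟨a₀, ha₀M⟩ := exists_mem_MaxMAp (S₁_zero G) hx0 (Ap_bdd_of_conductor hc₁ x)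
      have h1 := hmp _ (MaxMAp_glue G hG hx ha₀M hbM) _ (MaxMAp_glue G hG hx ha₀M hb'M)
      rw [ordS_glue G hG ha₀M.1.1 hbM.1, ordS_glue G hG ha₀M.1.1 hb'M.1] at h1
      omega
  · rintro ⟨mp₁, mp₂⟩ w hwM w' hw'M
    obtain ⟨a, ha, b, hb, rfl⟩ := (Ap_glue G hx).1 hwM.1
    obtain ⟨a', ha', b', hb', rfl⟩ := (Ap_glue G hx).1 hw'M.1
    obtain ⟨haMax, hbMax⟩ := MaxMAp_comp G hG hx ha hb hwM
    obtain ⟨haMax', hbMax'⟩ := MaxMAp_comp G hG hx ha' hb' hw'M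
    rw [ordS_glue G hG ha.1 hb, ordS_glue G hG ha'.1 hb']
    rw [mp₁ a haMax a' haMax', mp₂ b hbMax b' hbMax']

lemma stmt16_aux (G : Gluing) (hG : G.Specific) (x : ℕ) (hx : x ∈ G.S₁) (hx0 : x ≠ 0) :
    (IsSymmetric G.S ∧ MPureWrt G.S (G.q * x) ∧
        (IsSymmetric G.S₁ ∨ IsSymmetric G.S₂)) ↔
      (IsSymmetric G.S₁ ∧ MPureWrt G.S₁ x ∧
        IsSymmetric G.S₂ ∧ MPureWrt G.S₂ G.q) := by
  constructor
  · rintro ⟨hS, hMP, _⟩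
    obtain ⟨mp₁, mp₂⟩ := (MP_glue_iff G hG hx hx0).1 hMP
    exact ⟨sym_fwd₁ G hS, mp₁, sym_fwd₂ G hS, mp₂⟩
  · rintro ⟨h1, mp₁, h2, mp₂⟩
    exact ⟨sym_back G h1 h2, (MP_glue_iff G hG hx hx0).2 ⟨mp₁, mp₂⟩, Or.inl h1⟩

end NSAux

/-- for a specific gluing `S` of `S₁` and `S₂` and nonzero `x ∈ S₁`,
the following are equivalent:
(1) `S` is symmetric and M-pure with respect to `qx`, and `S₁` (or `S₂`) is symmetric;
(2) `S₁` is symmetric and M-pure with respect to `x`, and `S₂` is symmetric and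
M-pure with respect to `q`. -/
theorem stmt16 (G : Gluing) (hG : G.Specific) (x : ℕ) (hx : x ∈ G.S₁) (hx0 : x ≠ 0) :
    (IsSymmetric G.S ∧ MPureWrt G.S (G.q * x) ∧
        (IsSymmetric G.S₁ ∨ IsSymmetric G.S₂)) ↔
      (IsSymmetric G.S₁ ∧ MPureWrt G.S₁ x ∧
        IsSymmetric G.S₂ ∧ MPureWrt G.S₂ G.q) :=
  NSAux.stmt16_aux G hG x hx hx0
end

section
/- Let S = ⟨qm₁,…,qm_d, pn₁,…,pn_k⟩ be a specific gluing of S₁ and S₂, and assume S₂ is symmetric and M-pure with respect to q. Then [ord_S(s + qm₁) = ord_S(s)+1 for all s∈S, and S is symmetric and M-pure] if and only if [ord_{S₁}(s + m₁) = ord_{S₁}(s)+1 for all s∈S₁, and S₁ is symmetric and M-pure]; equivalently (by Bryant's criterion), the tangent cone G(S) is Gorenstein if and only if the tangent cone G(S₁) is Gorenstein. -/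
open scoped Pointwise

/-! ### Auxiliary development -/

section NumSgpAPI

variable {S : Set ℕ}

lemma nM_zero' : nM S 0 = S := rfl

lemma mem_nM_succ {x t : ℕ} :
    x ∈ nM S (t + 1) ↔ ∃ u ∈ S \ {(0 : ℕ)}, ∃ v ∈ nM S t, u + v = x :=
  Set.mem_add

lemma nM_subset (hadd : ∀ a ∈ S, ∀ b ∈ S, a + b ∈ S) : ∀ t, nM S t ⊆ S := by
  intro t
  induction t with
  | zero => exact fun x hx => hx
  | succ t ih =>
      intro x hx
      obtain ⟨u, hu, v, hv, rfl⟩ := mem_nM_succ.mp hx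
      exact hadd u hu.1 v (ih hv)

lemma add_mem_nM_left (hadd : ∀ a ∈ S, ∀ b ∈ S, a + b ∈ S) {x : ℕ} (hx : x ∈ S) :
    ∀ {t y}, y ∈ nM S t → x + y ∈ nM S t := by
  intro t
  induction t with
  | zero => exact fun hy => hadd x hx _ hy
  | succ t ih =>
      intro y hy
      obtain ⟨u, hu, v, hv, rfl⟩ := mem_nM_succ.mp hy
      exact mem_nM_succ.mpr ⟨u, hu, x + v, ih hv, by ring⟩

lemma add_mem_nM (hadd : ∀ a ∈ S, ∀ b ∈ S, a + b ∈ S) :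
    ∀ {t₁ t₂ x y}, x ∈ nM S t₁ → y ∈ nM S t₂ → x + y ∈ nM S (t₁ + t₂) := by
  intro t₁
  induction t₁ with
  | zero => intro t₂ x y hx hy; simpa using add_mem_nM_left hadd hx hy
  | succ t ih =>
      intro t₂ x y hx hy
      obtain ⟨u, hu, v, hv, rfl⟩ := mem_nM_succ.mp hx
      have : v + y ∈ nM S (t + t₂) := ih hv hy
      have h2 : u + (v + y) ∈ nM S (t + t₂ + 1) := mem_nM_succ.mpr ⟨u, hu, _, this, rfl⟩
      have he : t + t₂ + 1 = t + 1 + t₂ := by ring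
      rw [he] at h2
      convert h2 using 1
      ring

lemma nM_succ_subset (hadd : ∀ a ∈ S, ∀ b ∈ S, a + b ∈ S) :
    ∀ t, nM S (t + 1) ⊆ nM S t := by
  intro t
  induction t with
  | zero =>
      intro x hx
      obtain ⟨u, hu, v, hv, rfl⟩ := mem_nM_succ.mp hx
      exact hadd u hu.1 v hv
  | succ t ih =>
      intro x hx
      obtain ⟨u, hu, v, hv, rfl⟩ := mem_nM_succ.mp hx
      exact mem_nM_succ.mpr ⟨u, hu, v, ih hv, rfl⟩

lemma nM_antitone (hadd : ∀ a ∈ S, ∀ b ∈ S, a + b ∈ S) {t t' : ℕ} (h : t ≤ t') :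
    nM S t' ⊆ nM S t := by
  induction t' with
  | zero => simpa [Nat.le_zero.mp h]
  | succ t' ih =>
      rcases Nat.lt_or_ge t (t' + 1) with h' | h'
      · exact fun x hx => ih (Nat.lt_succ_iff.mp h') (nM_succ_subset hadd t' hx)
      · have : t = t' + 1 := le_antisymm h h'
        simp [this]

lemma mul_le_of_mem_nM {c : ℕ} (hc : ∀ u ∈ S, u ≠ 0 → c ≤ u) :
    ∀ {t x}, x ∈ nM S t → t * c ≤ x := by
  intro t
  induction t with
  | zero => simp
  | succ t ih =>
      intro x hx
      obtain ⟨u, hu, v, hv, rfl⟩ := mem_nM_succ.mp hx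
      have h1 : c ≤ u := hc u hu.1 (by simpa using hu.2)
      have h2 : t * c ≤ v := ih hv
      calc (t + 1) * c = c + t * c := by ring
      _ ≤ u + v := Nat.add_le_add h1 h2

lemma le_of_mem_nM {t x : ℕ} (h : x ∈ nM S t) : t ≤ x := by
  have := mul_le_of_mem_nM (S := S) (c := 1) (fun u _ hu => Nat.one_le_iff_ne_zero.mpr hu) h
  simpa using this

lemma bddAbove_ordSet (x : ℕ) : BddAbove {t | x ∈ nM S t} :=
  ⟨x, fun _ ht => le_of_mem_nM ht⟩

lemma mem_nM_ordS {x : ℕ} (hx : x ∈ S) : x ∈ nM S (ordS S x) := by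
  have h : sSup {t | x ∈ nM S t} ∈ {t | x ∈ nM S t} :=
    Nat.sSup_mem ⟨0, hx⟩ (bddAbove_ordSet x)
  exact h

lemma le_ordS {x t : ℕ} (h : x ∈ nM S t) : t ≤ ordS S x :=
  le_csSup (bddAbove_ordSet x) h

lemma le_ordS_iff (hadd : ∀ a ∈ S, ∀ b ∈ S, a + b ∈ S) {x t : ℕ} (hx : x ∈ S) :
    t ≤ ordS S x ↔ x ∈ nM S t :=
  ⟨fun h => nM_antitone hadd h (mem_nM_ordS hx), le_ordS⟩

lemma ordS_add_ge (hadd : ∀ a ∈ S, ∀ b ∈ S, a + b ∈ S) {x y : ℕ}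
    (hx : x ∈ S) (hy : y ∈ S) : ordS S x + ordS S y ≤ ordS S (x + y) :=
  le_ordS (add_mem_nM hadd (mem_nM_ordS hx) (mem_nM_ordS hy))

lemma ordS_zero : ordS S 0 = 0 := by
  have : {t | (0 : ℕ) ∈ nM S t} ⊆ {0} := by
    intro t ht
    simpa using Nat.le_zero.mp (le_of_mem_nM ht)
  rcases Set.subset_singleton_iff_eq.mp this with h | h <;> unfold ordS <;> rw [h]
  · exact csSup_empty
  · exact csSup_singleton 0

lemma ordS_pos (h0 : 0 ∈ S) {x : ℕ} (hx : x ∈ S) (hx0 : x ≠ 0) : 1 ≤ ordS S x :=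
  le_ordS (mem_nM_succ.mpr ⟨x, ⟨hx, by simpa using hx0⟩, 0, h0, by ring⟩)

lemma mult_mem {x : ℕ} (hx : x ∈ S) (hx0 : x ≠ 0) : mult S ∈ S ∧ mult S ≠ 0 :=
  Nat.sInf_mem (⟨x, hx, hx0⟩ : {y : ℕ | y ∈ S ∧ y ≠ 0}.Nonempty)

lemma mult_le {x : ℕ} (hx : x ∈ S) (hx0 : x ≠ 0) : mult S ≤ x :=
  Nat.sInf_le ⟨hx, hx0⟩

/-! zmem / Frobenius -/

lemma zmem_natCast {n : ℕ} : zmem S (n : ℤ) ↔ n ∈ S := by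
  constructor
  · rintro ⟨t, ht, h⟩
    have : t = n := by exact_mod_cast h
    rwa [this] at ht
  · intro h; exact ⟨n, h, rfl⟩

lemma zmem_nonneg {z : ℤ} (h : zmem S z) : 0 ≤ z := by
  obtain ⟨t, _, rfl⟩ := h; exact Int.natCast_nonneg t

lemma zmem_add (hadd : ∀ a ∈ S, ∀ b ∈ S, a + b ∈ S) {z w : ℤ}
    (hz : zmem S z) (hw : zmem S w) : zmem S (z + w) := by
  obtain ⟨t, ht, rfl⟩ := hz
  obtain ⟨u, hu, rfl⟩ := hw
  exact ⟨t + u, hadd t ht u hu, by push_cast; ring⟩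

lemma bddAbove_nonmem {N : ℕ} (hN : ∀ x, N ≤ x → x ∈ S) :
    BddAbove {z : ℤ | ¬ zmem S z} := by
  refine ⟨(N : ℤ), fun z hz => ?_⟩
  by_contra h
  push_neg at h
  have hz0 : 0 ≤ z := le_of_lt (lt_of_le_of_lt (Int.natCast_nonneg N) h)
  obtain ⟨n, rfl⟩ := Int.eq_ofNat_of_zero_le hz0
  exact hz (zmem_natCast.mpr (hN n (by exact_mod_cast h.le)))

lemma frob_not_zmem {N : ℕ} (hN : ∀ x, N ≤ x → x ∈ S) : ¬ zmem S (Frob S) := by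
  have h1 : ({z : ℤ | ¬ zmem S z}).Nonempty := by
    refine ⟨-1, fun h => ?_⟩
    have := zmem_nonneg h; omega
  exact Int.csSup_mem h1 (bddAbove_nonmem hN)

lemma zmem_of_frob_lt {N : ℕ} (hN : ∀ x, N ≤ x → x ∈ S) {z : ℤ}
    (h : Frob S < z) : zmem S z := by
  by_contra hz
  exact absurd (le_csSup (bddAbove_nonmem hN) hz) (not_le.mpr h)

lemma isSymmetric_iff (hadd : ∀ a ∈ S, ∀ b ∈ S, a + b ∈ S)
    {N : ℕ} (hN : ∀ x, N ≤ x → x ∈ S) :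
    IsSymmetric S ↔ ∀ z : ℤ, ¬ zmem S z → zmem S (Frob S - z) := by
  constructor
  · intro h z hz
    by_contra h2
    exact hz ((h z).mpr h2)
  · intro h z
    constructor
    · intro hz h2
      have : zmem S (Frob S) := by
        have := zmem_add hadd hz h2
        simpa using this
      exact frob_not_zmem hN this
    · intro h2
      by_contra hz
      exact h2 (h z hz)

end NumSgpAPI

section Reduction

variable {S : Set ℕ}

lemma exists_bound (hfin : {x : ℕ | x ∉ S}.Finite) : ∃ N : ℕ, ∀ x, N ≤ x → x ∈ S := by
  obtain ⟨B, hB⟩ := hfin.bddAbove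
  refine ⟨B + 1, fun x hx => ?_⟩
  by_contra h
  have := hB (Set.mem_setOf.mpr h)
  omega

variable (h0 : 0 ∈ S) (hadd : ∀ a ∈ S, ∀ b ∈ S, a + b ∈ S)
  {N : ℕ} (hN : ∀ x, N ≤ x → x ∈ S)

include hN in
lemma mult_pos_of_bound : mult S ∈ S ∧ mult S ≠ 0 :=
  mult_mem (hN (N + 1) (by omega)) (by omega)

include hN in
lemma mem_nM_of_big : ∀ t x, t * mult S + N ≤ x → x ∈ nM S t := by
  intro t
  induction t with
  | zero => exact fun x hx => hN x (by simpa using hx)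
  | succ t ih =>
      intro x hx
      have hμ := mult_pos_of_bound (S := S) hN
      have h1 : x - mult S ∈ nM S t := by
        apply ih
        have : (t + 1) * mult S = t * mult S + mult S := by ring
        omega
      refine mem_nM_succ.mpr ⟨mult S, ⟨hμ.1, by simpa using hμ.2⟩, x - mult S, h1, ?_⟩
      have : (t + 1) * mult S = t * mult S + mult S := by ring
      omega

include hN in
lemma lt_of_ordS_le {x r : ℕ} (hx : x ∈ S) (h : ordS S x ≤ r) :
    x < (r + 1) * mult S + N := by
  by_contra hc
  push_neg at hc
  have := le_ordS (mem_nM_of_big hN (r + 1) x hc)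
  omega

lemma mem_nM_iff_multiset {x t : ℕ} :
    x ∈ nM S t ↔ ∃ l : Multiset ℕ, Multiset.card l = t ∧ (∀ u ∈ l, u ∈ S ∧ u ≠ 0) ∧
      ∃ s₀ ∈ S, x = l.sum + s₀ := by
  induction t generalizing x with
  | zero =>
      constructor
      · intro hx; exact ⟨0, rfl, by simp, x, hx, by simp⟩
      · rintro ⟨l, hcard, _, s₀, hs₀, rfl⟩
        rw [Multiset.card_eq_zero.mp hcard]
        simpa [nM_zero'] using hs₀
  | succ t ih =>
      constructor
      · intro hx
        obtain ⟨u, hu, v, hv, rfl⟩ := mem_nM_succ.mp hx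
        obtain ⟨l, hcard, hl, s₀, hs₀, rfl⟩ := ih.mp hv
        exact ⟨u ::ₘ l, by simp [hcard], by
          intro w hw
          rcases Multiset.mem_cons.mp hw with h | h
          · exact h ▸ ⟨hu.1, by simpa using hu.2⟩
          · exact hl w h, s₀, hs₀, by simp [Multiset.sum_cons]; ring⟩
      · rintro ⟨l, hcard, hl, s₀, hs₀, rfl⟩
        have : ∃ u, u ∈ l := Multiset.card_pos_iff_exists_mem.mp (by omega)
        obtain ⟨u, hu⟩ := this
        obtain ⟨l', rfl⟩ := Multiset.exists_cons_of_mem hu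
        have hmem : l'.sum + s₀ ∈ nM S t := by
          refine ih.mpr ⟨l', by simpa using hcard, fun w hw => hl w (Multiset.mem_cons_of_mem hw), s₀, hs₀, rfl⟩
        refine mem_nM_succ.mpr ⟨u, ⟨(hl u (Multiset.mem_cons_self u l')).1,
          by simpa using (hl u (Multiset.mem_cons_self u l')).2⟩, l'.sum + s₀, hmem, by
            simp [Multiset.sum_cons]; ring⟩

include h0 hadd hN in
lemma red_mem : nM S (N + 1) = (fun y => mult S + y) '' nM S N := by
  have hμ := mult_pos_of_bound (S := S) hN
  apply Set.eq_of_subset_of_subset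
  · intro x hx
    obtain ⟨l, hcard, hl, s₀, hs₀, rfl⟩ := mem_nM_iff_multiset.mp hx
    by_cases hmem : mult S ∈ l
    · obtain ⟨l', rfl⟩ := Multiset.exists_cons_of_mem hmem
      refine ⟨l'.sum + s₀, mem_nM_iff_multiset.mpr ⟨l', by simpa using hcard,
        fun w hw => hl w (Multiset.mem_cons_of_mem hw), s₀, hs₀, rfl⟩, ?_⟩
      simp [Multiset.sum_cons]; ring
    · have hbig : ∀ u ∈ l, mult S + 1 ≤ u := by
        intro u hu
        have h1 := mult_le (hl u hu).1 (hl u hu).2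
        have h2 : u ≠ mult S := fun h => hmem (h ▸ hu)
        omega
      have hsum : (N + 1) * (mult S + 1) ≤ l.sum := by
        have := Multiset.card_nsmul_le_sum hbig
        rw [hcard] at this
        simpa [smul_eq_mul] using this
      have hkey : (N + 1) * (mult S + 1) = N * mult S + mult S + N + 1 := by ring
      refine ⟨l.sum + s₀ - mult S, mem_nM_of_big hN N _ (by omega), ?_⟩
      simp only
      omega
  · rintro x ⟨y, hy, rfl⟩
    exact mem_nM_succ.mpr ⟨mult S, ⟨hμ.1, by simpa using hμ.2⟩, y, hy, rfl⟩

include h0 hadd hN in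
lemma redNum_spec : nM S (redNum S + 1) = (fun y => mult S + y) '' nM S (redNum S) := by
  have h : N ∈ {r : ℕ | nM S (r + 1) = (fun y => mult S + y) '' nM S r} :=
    red_mem h0 hadd hN
  exact Nat.sInf_mem ⟨N, h⟩

include h0 hadd hN in
lemma redNum_spec_all : ∀ j, nM S (redNum S + 1 + j) =
    (fun y => mult S + y) '' nM S (redNum S + j) := by
  intro j
  induction j with
  | zero => simpa using redNum_spec h0 hadd hN
  | succ j ih =>
      have : nM S (redNum S + 1 + (j + 1)) = (S \ {0}) + nM S (redNum S + 1 + j) := rfl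
      rw [this, ih]
      apply Set.eq_of_subset_of_subset
      · intro x hx
        obtain ⟨u, hu, v, hv, heq⟩ := Set.mem_add.mp hx
        obtain ⟨y, hy, hyeq⟩ := hv
        refine ⟨u + y, mem_nM_succ.mpr ⟨u, hu, y, hy, rfl⟩, ?_⟩
        simp only at hyeq ⊢
        omega
      · rintro x ⟨y, hy, hyeq⟩
        obtain ⟨u, hu, v, hv, huv⟩ := mem_nM_succ.mp hy
        refine Set.mem_add.mpr ⟨u, hu, mult S + v, ⟨v, hv, rfl⟩, ?_⟩
        simp only at hyeq ⊢
        omega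

include h0 hadd hN in
lemma decomp_high_ord {x e : ℕ} (hx : x ∈ nM S e) (he : redNum S + 1 ≤ e) :
    mult S ≤ x ∧ x - mult S ∈ nM S (e - 1) := by
  have h1 : nM S e = (fun y => mult S + y) '' nM S (e - 1) := by
    have := redNum_spec_all h0 hadd hN (e - (redNum S + 1))
    have he1 : redNum S + 1 + (e - (redNum S + 1)) = e := by omega
    have he2 : redNum S + (e - (redNum S + 1)) = e - 1 := by omega
    rwa [he1, he2] at this
  rw [h1] at hx
  obtain ⟨y, hy, rfl⟩ := hx
  simp only
  constructor
  · omega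
  · simpa using hy

include h0 hadd hN in
lemma lS_bddAbove {x : ℕ} (hx : x ∈ S) :
    BddAbove {t : ℕ | ∃ s ∈ S, ordS S s ≤ redNum S ∧
      t = ordS S (s + x) - ordS S x - ordS S s} := by
  refine ⟨(redNum S + 1) * mult S + N + x, ?_⟩
  rintro t ⟨s, hs, hord, rfl⟩
  have h1 : s < (redNum S + 1) * mult S + N := lt_of_ordS_le hN hs hord
  have h2 : ordS S (s + x) ≤ s + x := le_of_mem_nM (mem_nM_ordS (hadd s hs x hx))
  omega

include h0 hadd hN in
lemma claimB {x : ℕ} (hx : x ∈ S) :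
    ∀ e, ∀ w ∈ S, ordS S w = e → ordS S (w + x) ≤ e + ordS S x + lS S x := by
  intro e
  induction e using Nat.strong_induction_on with
  | _ e ih =>
    intro w hw hord
    by_cases he : e ≤ redNum S
    · -- low order case : use the definition of lS
      have hmem : ordS S (w + x) - ordS S x - ordS S w ∈
          {t : ℕ | ∃ s ∈ S, ordS S s ≤ redNum S ∧
            t = ordS S (s + x) - ordS S x - ordS S s} :=
        ⟨w, hw, by omega, rfl⟩
      have hle : ordS S (w + x) - ordS S x - ordS S w ≤ lS S x :=
        le_csSup (lS_bddAbove h0 hadd hN hx) hmem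
      omega
    · push_neg at he
      have hwe : w ∈ nM S e := hord ▸ mem_nM_ordS hw
      obtain ⟨hμw, hw'⟩ := decomp_high_ord h0 hadd hN hwe (by omega)
      set w' := w - mult S with hw'def
      have hμ := mult_pos_of_bound (S := S) hN
      have hw'S : w' ∈ S := nM_subset hadd _ hw'
      have hordw' : ordS S w' = e - 1 := by
        have h1 : e - 1 ≤ ordS S w' := le_ordS hw'
        have h2 : ordS S w' + 1 ≤ e := by
          have h3 : ordS S (mult S) + ordS S w' ≤ ordS S (mult S + w') :=
            ordS_add_ge hadd hμ.1 hw'S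
          have h4 : mult S + w' = w := by omega
          have h5 := ordS_pos h0 hμ.1 hμ.2
          rw [h4] at h3
          omega
        omega
      set E := ordS S (w + x) with hEdef
      by_cases hE : E ≤ redNum S
      · omega
      · push_neg at hE
        have hwxS : w + x ∈ S := hadd w hw x hx
        have hwx : w + x ∈ nM S E := mem_nM_ordS hwxS
        obtain ⟨hμwx, hz⟩ := decomp_high_ord h0 hadd hN hwx (by omega)
        have hzeq : w + x - mult S = w' + x := by omega
        rw [hzeq] at hz
        have h6 : E - 1 ≤ ordS S (w' + x) := le_ordS hz
        have h7 := ih (e - 1) (by omega) w' hw'S hordw'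
        omega

include h0 hadd hN in
lemma claimB' {x : ℕ} (hx : x ∈ S) {w : ℕ} (hw : w ∈ S) :
    ordS S (w + x) ≤ ordS S w + ordS S x + lS S x :=
  claimB h0 hadd hN hx _ w hw rfl

include hadd in
lemma mem_add_mul {x w : ℕ} (hx : x ∈ S) (hw : w ∈ S) : ∀ t, w + t * x ∈ S := by
  intro t
  induction t with
  | zero => simpa using hw
  | succ t ih =>
      have h : w + (t + 1) * x = (w + t * x) + x := by ring
      rw [h]
      exact hadd _ ih x hx

include h0 hadd hN in
lemma claimB_iter {x : ℕ} (hx : x ∈ S) {w : ℕ} (hw : w ∈ S) :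
    ∀ t, ordS S (w + t * x) ≤ ordS S w + t * (ordS S x + lS S x) := by
  intro t
  induction t with
  | zero => simp
  | succ t ih =>
      have h1 : w + (t + 1) * x = (w + t * x) + x := by ring
      have h2 : w + t * x ∈ S := mem_add_mul hadd hx hw t
      have h3 := claimB' h0 hadd hN hx h2
      rw [h1] at *
      have hexp : (t + 1) * (ordS S x + lS S x) =
        t * (ordS S x + lS S x) + (ordS S x + lS S x) := by ring
      omega

end Reduction

namespace Gluing

variable (G : Gluing)

lemma S₁_zero : 0 ∈ G.S₁ := (AddSubmonoid.closure _).zero_mem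

lemma S₂_zero : 0 ∈ G.S₂ := (AddSubmonoid.closure _).zero_mem

lemma S_zero : 0 ∈ G.S := (AddSubmonoid.closure _).zero_mem

lemma S₁_add : ∀ a ∈ G.S₁, ∀ b ∈ G.S₁, a + b ∈ G.S₁ :=
  fun a ha b hb => AddSubmonoid.add_mem _ ha hb

lemma S₂_add : ∀ a ∈ G.S₂, ∀ b ∈ G.S₂, a + b ∈ G.S₂ :=
  fun a ha b hb => AddSubmonoid.add_mem _ ha hb

lemma S_add : ∀ a ∈ G.S, ∀ b ∈ G.S, a + b ∈ G.S :=
  fun a ha b hb => AddSubmonoid.add_mem _ ha hb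

lemma m_ne_zero (i : Fin G.d) : G.m i ≠ 0 := by
  intro h
  exact G.hmin₁ i (h ▸ (AddSubmonoid.closure _).zero_mem)

lemma n_ne_zero (j : Fin G.k) : G.n j ≠ 0 := by
  intro h
  exact G.hmin₂ j (h ▸ (AddSubmonoid.closure _).zero_mem)

lemma m₁_le (i : Fin G.d) : G.m₁ ≤ G.m i :=
  G.hm.monotone (by simp [Fin.le_def])

lemma n₁_le (j : Fin G.k) : G.n₁ ≤ G.n j :=
  G.hn.monotone (by simp [Fin.le_def])

lemma m₁_mem : G.m₁ ∈ G.S₁ := AddSubmonoid.subset_closure ⟨_, rfl⟩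

lemma n₁_mem : G.n₁ ∈ G.S₂ := AddSubmonoid.subset_closure ⟨_, rfl⟩

lemma m₁_ne_zero : G.m₁ ≠ 0 := G.m_ne_zero _

lemma n₁_ne_zero : G.n₁ ≠ 0 := G.n_ne_zero _

lemma m₁_le_of_mem {x : ℕ} (hx : x ∈ G.S₁) (hx0 : x ≠ 0) : G.m₁ ≤ x := by
  obtain ⟨l, hl, rfl⟩ := AddSubmonoid.exists_multiset_of_mem_closure hx
  have : ∃ y ∈ l, y ≠ 0 := by
    by_contra h
    push_neg at h
    exact hx0 (Multiset.sum_eq_zero h)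
  obtain ⟨y, hy, hy0⟩ := this
  obtain ⟨i, rfl⟩ := hl y hy
  calc G.m₁ ≤ G.m i := G.m₁_le i
  _ ≤ l.sum := Multiset.single_le_sum (fun _ _ => Nat.zero_le _) _ hy

lemma n₁_le_of_mem {x : ℕ} (hx : x ∈ G.S₂) (hx0 : x ≠ 0) : G.n₁ ≤ x := by
  obtain ⟨l, hl, rfl⟩ := AddSubmonoid.exists_multiset_of_mem_closure hx
  have : ∃ y ∈ l, y ≠ 0 := by
    by_contra h
    push_neg at h
    exact hx0 (Multiset.sum_eq_zero h)
  obtain ⟨y, hy, hy0⟩ := this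
  obtain ⟨j, rfl⟩ := hl y hy
  calc G.n₁ ≤ G.n j := G.n₁_le j
  _ ≤ l.sum := Multiset.single_le_sum (fun _ _ => Nat.zero_le _) _ hy

lemma mult_S₁ : mult G.S₁ = G.m₁ := by
  have h1 : mult G.S₁ ∈ G.S₁ ∧ mult G.S₁ ≠ 0 := mult_mem G.m₁_mem G.m₁_ne_zero
  exact le_antisymm (mult_le G.m₁_mem G.m₁_ne_zero) (G.m₁_le_of_mem h1.1 h1.2)

lemma mult_S₂ : mult G.S₂ = G.n₁ := by
  have h1 : mult G.S₂ ∈ G.S₂ ∧ mult G.S₂ ≠ 0 := mult_mem G.n₁_mem G.n₁_ne_zero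
  exact le_antisymm (mult_le G.n₁_mem G.n₁_ne_zero) (G.n₁_le_of_mem h1.1 h1.2)

lemma one_lt_p : 1 < G.p := by
  rcases Nat.lt_or_ge G.p 2 with h | h
  · exfalso
    interval_cases hp : G.p
    · -- p = 0 : then gcd = q = 1, so 1 ∈ S₂, so m₁-type argument gives 1 ∈ range n
      have hq1 : G.q = 1 := by have := G.hpq; rwa [hp, Nat.gcd_zero_left] at this
      have h1 : (1 : ℕ) ∈ G.S₂ := by rw [← hq1]; exact G.hq
      have h2 : G.n₁ ≤ 1 := G.n₁_le_of_mem h1 one_ne_zero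
      have h3 : G.n₁ = 1 := le_antisymm h2 (Nat.one_le_iff_ne_zero.mpr G.n₁_ne_zero)
      exact G.hqn ⟨_, h3.trans hq1.symm⟩
    · -- p = 1 : 1 ∈ S₁, so 1 ∈ range m, contradiction with hpm
      have h1 : (1 : ℕ) ∈ G.S₁ := by rw [← hp]; exact G.hp
      have h2 : G.m₁ ≤ 1 := G.m₁_le_of_mem h1 one_ne_zero
      have h3 : G.m₁ = 1 := le_antisymm h2 (Nat.one_le_iff_ne_zero.mpr G.m₁_ne_zero)
      exact G.hpm ⟨_, h3.trans hp.symm⟩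
  · exact h

lemma one_lt_q : 1 < G.q := by
  rcases Nat.lt_or_ge G.q 2 with h | h
  · exfalso
    interval_cases hq : G.q
    · have hp1 : G.p = 1 := by have := G.hpq; rwa [hq, Nat.gcd_zero_right] at this
      have h1 : (1 : ℕ) ∈ G.S₁ := by rw [← hp1]; exact G.hp
      have h2 : G.m₁ ≤ 1 := G.m₁_le_of_mem h1 one_ne_zero
      have h3 : G.m₁ = 1 := le_antisymm h2 (Nat.one_le_iff_ne_zero.mpr G.m₁_ne_zero)
      exact G.hpm ⟨_, h3.trans hp1.symm⟩
    · have h1 : (1 : ℕ) ∈ G.S₂ := by rw [← hq]; exact G.hq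
      have h2 : G.n₁ ≤ 1 := G.n₁_le_of_mem h1 one_ne_zero
      have h3 : G.n₁ = 1 := le_antisymm h2 (Nat.one_le_iff_ne_zero.mpr G.n₁_ne_zero)
      exact G.hqn ⟨_, h3.trans hq.symm⟩
  · exact h

lemma p_ne_zero : G.p ≠ 0 := by have := G.one_lt_p; omega

lemma q_ne_zero : G.q ≠ 0 := by have := G.one_lt_q; omega

/-- membership in the glued semigroup -/
lemma mem_S_iff {s : ℕ} : s ∈ G.S ↔ ∃ a ∈ G.S₁, ∃ b ∈ G.S₂, s = G.q * a + G.p * b := by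
  constructor
  · intro hs
    have h1 : s ∈ AddSubmonoid.closure ((fun x => G.q * x) '' Set.range G.m) ⊔
        AddSubmonoid.closure ((fun x => G.p * x) '' Set.range G.n) := by
      rw [← AddSubmonoid.closure_union]; exact hs
    obtain ⟨x, hx, y, hy, hxy⟩ := AddSubmonoid.mem_sup.mp h1
    have hx' : x ∈ AddSubmonoid.map (AddMonoidHom.mulLeft G.q)
        (AddSubmonoid.closure (Set.range G.m)) := by
      rw [AddMonoidHom.map_mclosure]; exact hx
    have hy' : y ∈ AddSubmonoid.map (AddMonoidHom.mulLeft G.p)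
        (AddSubmonoid.closure (Set.range G.n)) := by
      rw [AddMonoidHom.map_mclosure]; exact hy
    obtain ⟨a, ha, hax⟩ := AddSubmonoid.mem_map.mp hx'
    obtain ⟨b, hb, hby⟩ := AddSubmonoid.mem_map.mp hy'
    exact ⟨a, ha, b, hb, by rw [← hxy, ← hax, ← hby]; rfl⟩
  · rintro ⟨a, ha, b, hb, rfl⟩
    have h1 : G.q * a ∈ G.S := by
      have : G.q * a ∈ AddSubmonoid.map (AddMonoidHom.mulLeft G.q)
          (AddSubmonoid.closure (Set.range G.m)) := ⟨a, ha, rfl⟩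
      rw [AddMonoidHom.map_mclosure] at this
      exact AddSubmonoid.closure_mono (Set.subset_union_left
        (t := (fun x => G.p * x) '' Set.range G.n)) this
    have h2 : G.p * b ∈ G.S := by
      have : G.p * b ∈ AddSubmonoid.map (AddMonoidHom.mulLeft G.p)
          (AddSubmonoid.closure (Set.range G.n)) := ⟨b, hb, rfl⟩
      rw [AddMonoidHom.map_mclosure] at this
      exact AddSubmonoid.closure_mono Set.subset_union_right this
    exact G.S_add _ h1 _ h2

lemma q_mul_mem {a : ℕ} (ha : a ∈ G.S₁) : G.q * a ∈ G.S :=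
  G.mem_S_iff.mpr ⟨a, ha, 0, G.S₂_zero, by ring⟩

lemma p_mul_mem {b : ℕ} (hb : b ∈ G.S₂) : G.p * b ∈ G.S :=
  G.mem_S_iff.mpr ⟨0, G.S₁_zero, b, hb, by ring⟩

/-- reduction of a representation to one with Apéry second component -/
lemma ap_reduce : ∀ b : ℕ, b ∈ G.S₂ → ∀ a ∈ G.S₁,
    ∃ a' ∈ G.S₁, ∃ b' ∈ Ap G.S₂ G.q, G.q * a + G.p * b = G.q * a' + G.p * b' := by
  intro b
  induction b using Nat.strong_induction_on with
  | _ b ih =>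
    intro hb a ha
    by_cases h : ∃ t ∈ G.S₂, b = t + G.q
    · obtain ⟨u, hu, rfl⟩ := h
      have hlt : u < u + G.q := by have := G.one_lt_q; omega
      obtain ⟨a', ha', b', hb', heq⟩ := ih u hlt hu (a + G.p) (G.S₁_add _ ha _ G.hp)
      refine ⟨a', ha', b', hb', ?_⟩
      rw [← heq]; ring
    · exact ⟨a, ha, b, ⟨hb, h⟩, rfl⟩

lemma exists_ap_rep {s : ℕ} (hs : s ∈ G.S) :
    ∃ a ∈ G.S₁, ∃ b ∈ Ap G.S₂ G.q, s = G.q * a + G.p * b := by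
  obtain ⟨a, ha, b, hb, rfl⟩ := G.mem_S_iff.mp hs
  obtain ⟨a', ha', b', hb', heq⟩ := G.ap_reduce b hb a ha
  exact ⟨a', ha', b', hb', heq⟩

lemma coprime_qp : IsCoprime (G.q : ℤ) (G.p : ℤ) := by
  rw [Int.isCoprime_iff_gcd_eq_one]
  simpa [Int.gcd, Nat.gcd_comm] using G.hpq

/-- two representations of the same element differ by the `(p, -q)` trade. -/
lemma class_eq {a a' b b' : ℕ} (h : G.q * a + G.p * b = G.q * a' + G.p * b')
    (hbb : b ≤ b') : ∃ t : ℕ, b' = b + t * G.q ∧ a = a' + t * G.p := by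
  obtain ⟨c, rfl⟩ : ∃ c, b' = b + c := ⟨b' - b, by omega⟩
  have hexp : G.p * (b + c) = G.p * b + G.p * c := by ring
  have h2 : G.q * a = G.q * a' + G.p * c := by linarith
  have hdvd : (G.q : ℤ) ∣ (G.p : ℤ) * (c : ℤ) := by
    refine ⟨(a : ℤ) - (a' : ℤ), ?_⟩
    have h2' : (G.q : ℤ) * a = G.q * a' + G.p * c := by exact_mod_cast h2
    ring_nf
    ring_nf at h2'
    linarith
  have hdvd2 : (G.q : ℤ) ∣ (c : ℤ) := (G.coprime_qp).dvd_of_dvd_mul_left hdvd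
  have hdvd3 : G.q ∣ c := Int.natCast_dvd_natCast.mp hdvd2
  obtain ⟨t, rfl⟩ := hdvd3
  refine ⟨t, by ring, ?_⟩
  have h3 : G.q * a = G.q * (a' + t * G.p) := by rw [h2]; ring
  exact Nat.eq_of_mul_eq_mul_left (by have := G.one_lt_q; omega) h3

/-- uniqueness of the Apéry representation -/
lemma ap_rep_unique {a a' b b' : ℕ} (hb : b ∈ Ap G.S₂ G.q) (hb' : b' ∈ Ap G.S₂ G.q)
    (h : G.q * a + G.p * b = G.q * a' + G.p * b') : a = a' ∧ b = b' := by
  have key : ∀ u u' v v' : ℕ, v ∈ Ap G.S₂ G.q → v' ∈ Ap G.S₂ G.q →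
      G.q * u + G.p * v = G.q * u' + G.p * v' → v ≤ v' → u = u' ∧ v = v' := by
    intro u u' v v' hv hv' heq hle
    obtain ⟨t, ht1, ht2⟩ := G.class_eq heq hle
    rcases Nat.eq_zero_or_pos t with ht | ht
    · subst ht; constructor <;> omega
    · exfalso
      apply hv'.2
      refine ⟨v + (t - 1) * G.q, ?_, by rw [ht1]; cases t with
        | zero => omega
        | succ t => simp [Nat.succ_sub_one]; ring⟩
      have : (t - 1) * G.q ∈ G.S₂ := by
        induction (t - 1) with
        | zero => simpa using G.S₂_zero
        | succ k ihk =>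
            have : (k + 1) * G.q = k * G.q + G.q := by ring
            rw [this]
            exact G.S₂_add _ ihk _ G.hq
      exact G.S₂_add _ hv.1 _ this
  rcases le_total b b' with hle | hle
  · exact key a a' b b' hb hb' h hle
  · have := key a' a b' b hb' hb h.symm hle
    exact ⟨this.1.symm, this.2.symm⟩

lemma mem_nM_S_of_mem_nM_S₁ : ∀ {t a}, a ∈ nM G.S₁ t → G.q * a ∈ nM G.S t := by
  intro t
  induction t with
  | zero => exact fun ha => G.q_mul_mem ha
  | succ t ih =>
      intro a ha
      obtain ⟨u, hu, v, hv, rfl⟩ := mem_nM_succ.mp ha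
      refine mem_nM_succ.mpr ⟨G.q * u, ⟨G.q_mul_mem hu.1, ?_⟩, G.q * v, ih hv, by ring⟩
      have hu0 : u ≠ 0 := by simpa using hu.2
      simp only [Set.mem_singleton_iff]
      exact Nat.mul_ne_zero G.q_ne_zero hu0

lemma mem_nM_S_of_mem_nM_S₂ : ∀ {t b}, b ∈ nM G.S₂ t → G.p * b ∈ nM G.S t := by
  intro t
  induction t with
  | zero => exact fun hb => G.p_mul_mem hb
  | succ t ih =>
      intro b hb
      obtain ⟨u, hu, v, hv, rfl⟩ := mem_nM_succ.mp hb
      refine mem_nM_succ.mpr ⟨G.p * u, ⟨G.p_mul_mem hu.1, ?_⟩, G.p * v, ih hv, by ring⟩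
      have hu0 : u ≠ 0 := by simpa using hu.2
      simp only [Set.mem_singleton_iff]
      exact Nat.mul_ne_zero G.p_ne_zero hu0

/-- superadditive lower bound for the order on the gluing -/
lemma ord_lower {a b : ℕ} (ha : a ∈ G.S₁) (hb : b ∈ G.S₂) :
    ordS G.S₁ a + ordS G.S₂ b ≤ ordS G.S (G.q * a + G.p * b) :=
  le_ordS (add_mem_nM G.S_add (G.mem_nM_S_of_mem_nM_S₁ (mem_nM_ordS ha))
    (G.mem_nM_S_of_mem_nM_S₂ (mem_nM_ordS hb)))

/-- every element of `nM S N` has a representation witnessing order at least `N` -/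
lemma nM_S_rep : ∀ {N s}, s ∈ nM G.S N →
    ∃ a ∈ G.S₁, ∃ b ∈ G.S₂, s = G.q * a + G.p * b ∧ N ≤ ordS G.S₁ a + ordS G.S₂ b := by
  intro N
  induction N with
  | zero =>
      intro s hs
      obtain ⟨a, ha, b, hb, rfl⟩ := G.mem_S_iff.mp hs
      exact ⟨a, ha, b, hb, rfl, Nat.zero_le _⟩
  | succ N ih =>
      intro s hs
      obtain ⟨u, hu, v, hv, rfl⟩ := mem_nM_succ.mp hs
      obtain ⟨a₀, ha₀, b₀, hb₀, hu_eq⟩ := G.mem_S_iff.mp hu.1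
      obtain ⟨a, ha, b, hb, hv_eq, hN⟩ := ih hv
      have hu0 : u ≠ 0 := by simpa using hu.2
      have hord1 : 1 ≤ ordS G.S₁ a₀ + ordS G.S₂ b₀ := by
        rcases Nat.eq_zero_or_pos a₀ with h0 | h0
        · have hb₀0 : b₀ ≠ 0 := by
            intro h
            exact hu0 (by rw [hu_eq, h0, h]; ring)
          have := ordS_pos G.S₂_zero hb₀ hb₀0
          omega
        · have := ordS_pos G.S₁_zero ha₀ (by omega)
          omega
      refine ⟨a₀ + a, G.S₁_add _ ha₀ _ ha, b₀ + b, G.S₂_add _ hb₀ _ hb, by rw [hu_eq, hv_eq]; ring, ?_⟩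
      have h1 := ordS_add_ge G.S₁_add ha₀ ha
      have h2 := ordS_add_ge G.S₂_add hb₀ hb
      omega

lemma ordS_nsmul_ge {S : Set ℕ} (h0 : 0 ∈ S) (hadd : ∀ a ∈ S, ∀ b ∈ S, a + b ∈ S)
    {x : ℕ} (hx : x ∈ S) : ∀ t, t * ordS S x ≤ ordS S (t * x) := by
  have key : ∀ t, t * x ∈ nM S (t * ordS S x) := by
    intro t
    induction t with
    | zero => simpa [nM_zero'] using h0
    | succ t ih =>
        have h1 : (t + 1) * x = x + t * x := by ring
        have h2 : (t + 1) * ordS S x = ordS S x + t * ordS S x := by ring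
        rw [h1, h2]
        exact add_mem_nM hadd (mem_nM_ordS hx) ih
  exact fun t => le_ordS (key t)

lemma S₂_bound (G : Gluing) : ∃ N : ℕ, ∀ x, N ≤ x → x ∈ G.S₂ :=
  exists_bound G.hnum₂.2.2

lemma S₁_bound (G : Gluing) : ∃ N : ℕ, ∀ x, N ≤ x → x ∈ G.S₁ :=
  exists_bound G.hnum₁.2.2

/-- THE order formula for specific gluings. -/
lemma ord_formula (hG : G.Specific) {a b : ℕ} (ha : a ∈ G.S₁) (hb : b ∈ Ap G.S₂ G.q) :
    ordS G.S (G.q * a + G.p * b) = ordS G.S₁ a + ordS G.S₂ b := by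
  refine le_antisymm ?_ (G.ord_lower ha hb.1)
  obtain ⟨N, hN⟩ := G.S₂_bound
  have hsS : G.q * a + G.p * b ∈ G.S := G.mem_S_iff.mpr ⟨a, ha, b, hb.1, rfl⟩
  obtain ⟨a', ha', b', hb', heq, hord⟩ := G.nM_S_rep (mem_nM_ordS hsS)
  rcases le_total b' b with hle | hle
  · obtain ⟨t, ht1, ht2⟩ := G.class_eq heq.symm hle
    rcases Nat.eq_zero_or_pos t with ht | ht
    · subst ht
      simp only [Nat.zero_mul, Nat.add_zero] at ht1 ht2
      rw [ht2, ← ht1] at hord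
      exact hord
    · exfalso
      apply hb.2
      refine ⟨b' + (t - 1) * G.q, mem_add_mul G.S₂_add G.hq hb' (t - 1), ?_⟩
      have : (t - 1) * G.q + G.q = t * G.q := by
        cases t with
        | zero => omega
        | succ t => simp [Nat.succ_sub_one]; ring
      omega
  · obtain ⟨t, ht1, ht2⟩ := G.class_eq heq hle
    -- ord₂ b' ≤ ord₂ b + t * (ord₂ q + l)
    have h1 : ordS G.S₂ b' ≤ ordS G.S₂ b + t * (ordS G.S₂ G.q + lS G.S₂ G.q) := by
      rw [ht1]
      exact claimB_iter G.S₂_zero G.S₂_add hN G.hq hb.1 t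
    -- ord₁ a ≥ ord₁ a' + t * ord₁ p
    have h2 : ordS G.S₁ a' + t * ordS G.S₁ G.p ≤ ordS G.S₁ a := by
      rw [ht2]
      calc ordS G.S₁ a' + t * ordS G.S₁ G.p
          ≤ ordS G.S₁ a' + ordS G.S₁ (t * G.p) := by
            have := ordS_nsmul_ge G.S₁_zero G.S₁_add G.hp t
            omega
        _ ≤ ordS G.S₁ (a' + t * G.p) :=
            ordS_add_ge G.S₁_add ha' (by simpa using mem_add_mul G.S₁_add G.hp G.S₁_zero t)
    have h3 : t * (ordS G.S₂ G.q + lS G.S₂ G.q) ≤ t * ordS G.S₁ G.p :=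
      Nat.mul_le_mul_left t hG
    omega

/-- `q ≤ n₁ * (ord₂ q + l_q)` -/
lemma q_le (hG : G.Specific) : G.q ≤ G.n₁ * (ordS G.S₂ G.q + lS G.S₂ G.q) := by
  obtain ⟨N, hN⟩ := G.S₂_bound
  set c := ordS G.S₂ G.q + lS G.S₂ G.q with hc
  by_contra h
  push_neg at h
  set t := G.n₁ + N with ht
  have h1 : ordS G.S₂ (t * G.q) ≤ t * c := by
    have := claimB_iter G.S₂_zero G.S₂_add hN G.hq G.S₂_zero t
    simpa [ordS_zero] using this
  have h2 : (t * c + 1) * mult G.S₂ + N ≤ t * G.q := by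
    rw [G.mult_S₂]
    have hq1 : G.n₁ * c + 1 ≤ G.q := h
    calc (t * c + 1) * G.n₁ + N = t * c * G.n₁ + G.n₁ + N := by ring
    _ ≤ t * c * G.n₁ + t := by omega
    _ = t * (c * G.n₁ + 1) := by ring
    _ ≤ t * G.q := Nat.mul_le_mul_left t (by rw [Nat.mul_comm c G.n₁]; omega)
  have h3 := le_ordS (mem_nM_of_big hN (t * c + 1) (t * G.q) h2)
  omega

lemma qm₁_le_pn₁ (hG : G.Specific) : G.q * G.m₁ ≤ G.p * G.n₁ := by
  have h1 : ordS G.S₁ G.p * G.m₁ ≤ G.p :=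
    mul_le_of_mem_nM (fun u hu hu0 => G.m₁_le_of_mem hu hu0) (mem_nM_ordS G.hp)
  have h2 := G.q_le hG
  have h3 : ordS G.S₂ G.q + lS G.S₂ G.q ≤ ordS G.S₁ G.p := hG
  calc G.q * G.m₁ ≤ G.n₁ * (ordS G.S₂ G.q + lS G.S₂ G.q) * G.m₁ :=
        Nat.mul_le_mul_right _ h2
  _ ≤ G.n₁ * ordS G.S₁ G.p * G.m₁ := by
        have := Nat.mul_le_mul_left G.n₁ h3
        exact Nat.mul_le_mul_right _ this
  _ = G.n₁ * (ordS G.S₁ G.p * G.m₁) := by ring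
  _ ≤ G.n₁ * G.p := Nat.mul_le_mul_left _ h1
  _ = G.p * G.n₁ := by ring

lemma qm₁_mem : G.q * G.m₁ ∈ G.S := G.q_mul_mem G.m₁_mem

lemma qm₁_ne_zero : G.q * G.m₁ ≠ 0 := Nat.mul_ne_zero G.q_ne_zero G.m₁_ne_zero

lemma mult_S (hG : G.Specific) : mult G.S = G.q * G.m₁ := by
  refine le_antisymm (mult_le G.qm₁_mem G.qm₁_ne_zero) ?_
  have h1 := mult_mem G.qm₁_mem G.qm₁_ne_zero
  obtain ⟨a, ha, b, hb, heq⟩ := G.mem_S_iff.mp h1.1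
  rcases Nat.eq_zero_or_pos a with ha0 | ha0
  · rcases Nat.eq_zero_or_pos b with hb0 | hb0
    · exfalso; apply h1.2; rw [heq, ha0, hb0]; ring
    · have : G.p * G.n₁ ≤ G.p * b := Nat.mul_le_mul_left _ (G.n₁_le_of_mem hb (by omega))
      have h2 := G.qm₁_le_pn₁ hG
      omega
  · have : G.q * G.m₁ ≤ G.q * a := Nat.mul_le_mul_left _ (G.m₁_le_of_mem ha (by omega))
    omega

/-! ### Frobenius number of the gluing and symmetry transfer -/

lemma zmem_S_comb {α β : ℤ} (hα : zmem G.S₁ α) (hβ : zmem G.S₂ β) :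
    zmem G.S (G.q * α + G.p * β) := by
  obtain ⟨a, ha, rfl⟩ := hα
  obtain ⟨b, hb, rfl⟩ := hβ
  exact ⟨G.q * a + G.p * b, G.mem_S_iff.mpr ⟨a, ha, b, hb, rfl⟩, by push_cast; ring⟩

lemma zmem₂_of_frob_lt {z : ℤ} (h : Frob G.S₂ < z) : zmem G.S₂ z := by
  obtain ⟨N, hN⟩ := G.S₂_bound
  exact zmem_of_frob_lt hN h

lemma zmem₁_of_frob_lt {z : ℤ} (h : Frob G.S₁ < z) : zmem G.S₁ z := by
  obtain ⟨N, hN⟩ := G.S₁_bound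
  exact zmem_of_frob_lt hN h

lemma frob₂_not_zmem : ¬ zmem G.S₂ (Frob G.S₂) := by
  obtain ⟨N, hN⟩ := G.S₂_bound
  exact frob_not_zmem hN

lemma frob₁_not_zmem : ¬ zmem G.S₁ (Frob G.S₁) := by
  obtain ⟨N, hN⟩ := G.S₁_bound
  exact frob_not_zmem hN

lemma neg_one_lt_frob₂ : -1 ≤ Frob G.S₂ := by
  obtain ⟨N, hN⟩ := G.S₂_bound
  refine le_csSup (bddAbove_nonmem hN) ?_
  intro h
  have := zmem_nonneg h
  omega

lemma neg_one_lt_frob₁ : -1 ≤ Frob G.S₁ := by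
  obtain ⟨N, hN⟩ := G.S₁_bound
  refine le_csSup (bddAbove_nonmem hN) ?_
  intro h
  have := zmem_nonneg h
  omega

/-- for any integer `z` there is `b ∈ (F₂, F₂ + q]` with `q ∣ z - p b`. -/
lemma exists_decomp (z : ℤ) : ∃ b : ℤ, Frob G.S₂ < b ∧ b ≤ Frob G.S₂ + G.q ∧
    (G.q : ℤ) ∣ (z - G.p * b) := by
  obtain ⟨x, y, hxy⟩ := G.coprime_qp
  have hq0 : (0 : ℤ) < G.q := by have := G.one_lt_q; exact_mod_cast Nat.lt_of_lt_of_le Nat.zero_lt_one this.le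
  set F₂ := Frob G.S₂
  set u := z - G.p * (F₂ + 1) with hu
  set c := (u * y) % (G.q : ℤ) with hc
  have hc0 : 0 ≤ c := Int.emod_nonneg _ (by omega)
  have hcq : c < G.q := Int.emod_lt_of_pos _ hq0
  refine ⟨F₂ + 1 + c, by omega, by omega, ?_⟩
  have hmod : c = u * y - (G.q : ℤ) * (u * y / G.q) := Int.emod_def _ _
  refine ⟨u * x + G.p * (u * y / G.q), ?_⟩
  have h1 : z - G.p * (F₂ + 1 + c) = u - G.p * c := by rw [hu]; ring
  rw [h1, hmod]
  linear_combination (-u) * hxy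

lemma frob_bound : ∀ z : ℤ,
    (G.q : ℤ) * Frob G.S₁ + G.p * Frob G.S₂ + G.p * G.q < z → zmem G.S z := by
  intro z hz
  obtain ⟨b, hb1, hb2, hdvd⟩ := G.exists_decomp z
  have hzb : zmem G.S₂ b := G.zmem₂_of_frob_lt hb1
  set a := (z - G.p * b) / (G.q : ℤ) with ha
  have hq0 : (0 : ℤ) < G.q := by have := G.one_lt_q; exact_mod_cast Nat.lt_of_lt_of_le Nat.zero_lt_one this.le
  have haq : (G.q : ℤ) * a = z - G.p * b := Int.mul_ediv_cancel' hdvd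
  have hp0 : (0 : ℤ) ≤ G.p := Int.natCast_nonneg _
  have hza : Frob G.S₁ < a := by
    have h1 : (G.q : ℤ) * Frob G.S₁ < (G.q : ℤ) * a := by
      rw [haq]
      have : (G.p : ℤ) * b ≤ G.p * (Frob G.S₂ + G.q) := by
        apply mul_le_mul_of_nonneg_left hb2 hp0
      nlinarith
    exact lt_of_mul_lt_mul_left h1 (by omega)
  have hzma : zmem G.S₁ a := G.zmem₁_of_frob_lt hza
  have := G.zmem_S_comb hzma hzb
  rwa [haq, show z - G.p * b + G.p * b = z by ring] at this
  
lemma S_bound : ∃ N : ℕ, ∀ x, N ≤ x → x ∈ G.S := by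
  refine ⟨((G.q : ℤ) * Frob G.S₁ + G.p * Frob G.S₂ + G.p * G.q).toNat + 1, fun x hx => ?_⟩
  have h : (G.q : ℤ) * Frob G.S₁ + G.p * Frob G.S₂ + G.p * G.q < (x : ℤ) := by
    have := Int.self_le_toNat ((G.q : ℤ) * Frob G.S₁ + G.p * Frob G.S₂ + G.p * G.q)
    have hx' : (((G.q : ℤ) * Frob G.S₁ + G.p * Frob G.S₂ + G.p * G.q).toNat : ℤ) + 1 ≤ (x : ℤ) := by
      exact_mod_cast hx
    omega
  exact zmem_natCast.mp (G.frob_bound x h)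

lemma frob_S_not_zmem : ¬ zmem G.S (Frob G.S) := by
  obtain ⟨N, hN⟩ := G.S_bound
  exact frob_not_zmem hN

/-- The Frobenius number of the gluing : `F(S) = q F₁ + p F₂ + p q`. -/
lemma frob_S : Frob G.S = (G.q : ℤ) * Frob G.S₁ + G.p * Frob G.S₂ + G.p * G.q := by
  obtain ⟨N, hN⟩ := G.S_bound
  have hq0 : (0 : ℤ) < G.q := by have := G.one_lt_q; exact_mod_cast Nat.lt_of_lt_of_le Nat.zero_lt_one this.le
  have hnotz : ¬ zmem G.S ((G.q : ℤ) * Frob G.S₁ + G.p * Frob G.S₂ + G.p * G.q) := by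
    rintro ⟨s, hs, hcast⟩
    obtain ⟨a, ha, b, hb, rfl⟩ := G.mem_S_iff.mp hs
    have heq : (G.q : ℤ) * Frob G.S₁ + G.p * Frob G.S₂ + G.p * G.q
        = G.q * a + G.p * b := by push_cast at hcast ⊢; linarith
    have hdvd : (G.q : ℤ) ∣ ((b : ℤ) - Frob G.S₂ - G.q) := by
      apply G.coprime_qp.dvd_of_dvd_mul_left
      refine ⟨Frob G.S₁ - a, ?_⟩
      ring_nf
      ring_nf at heq
      linarith
    obtain ⟨γ, hγ⟩ := hdvd
    have hFa : Frob G.S₁ - a = G.p * γ := by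
      have h1 : (G.q : ℤ) * (Frob G.S₁ - a) = G.q * (G.p * γ) := by
        have : (G.p : ℤ) * ((b : ℤ) - Frob G.S₂ - G.q) = G.p * (G.q * γ) := by rw [hγ]
        nlinarith [heq]
      exact mul_left_cancel₀ (by omega) h1
    rcases le_or_gt 0 γ with hγ0 | hγ0
    · apply G.frob₁_not_zmem
      have : Frob G.S₁ = (a : ℤ) + G.p * γ.toNat := by
        rw [Int.toNat_of_nonneg hγ0]; linarith [hFa]
      rw [this]
      have hmem : a + γ.toNat * G.p ∈ G.S₁ := mem_add_mul G.S₁_add G.hp ha γ.toNat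
      exact ⟨a + γ.toNat * G.p, hmem, by push_cast; ring⟩
    · apply G.frob₂_not_zmem
      have h2 : Frob G.S₂ = (b : ℤ) + G.q * (-1 - γ).toNat := by
        rw [Int.toNat_of_nonneg (by omega)]
        have hexp : (G.q : ℤ) * (-1 - γ) = -(G.q : ℤ) - G.q * γ := by ring
        linarith [hγ, hexp]
      rw [h2]
      have hmem : b + (-1 - γ).toNat * G.q ∈ G.S₂ := mem_add_mul G.S₂_add G.hq hb _
      exact ⟨b + (-1 - γ).toNat * G.q, hmem, by push_cast; ring⟩
  refine le_antisymm ?_ (le_csSup (bddAbove_nonmem hN) hnotz)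
  by_contra h
  push_neg at h
  exact G.frob_S_not_zmem (G.frob_bound _ h)

/-- If `b` is in the Apéry set then `b - q` is not an (integer) element of `S₂`. -/
lemma ap_not_zmem {b : ℕ} (hb : b ∈ Ap G.S₂ G.q) : ¬ zmem G.S₂ ((b : ℤ) - G.q) := by
  rintro ⟨t, ht, hcast⟩
  exact hb.2 ⟨t, ht, by omega⟩

/-- symmetry ascends from `S₁` (together with `S₂`) to the gluing. -/
lemma sym_S_of_sym_S₁ (hsym₂ : IsSymmetric G.S₂) (hsym₁ : IsSymmetric G.S₁) :
    IsSymmetric G.S := by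
  obtain ⟨N, hN⟩ := G.S_bound
  rw [isSymmetric_iff G.S_add hN]
  intro z hz
  have hq0 : (0 : ℤ) < G.q := by have := G.one_lt_q; exact_mod_cast Nat.lt_of_lt_of_le Nat.zero_lt_one this.le
  obtain ⟨b, hb1, hb2, hdvd⟩ := G.exists_decomp z
  have hzb : zmem G.S₂ b := G.zmem₂_of_frob_lt hb1
  obtain ⟨bn, hbn, rfl⟩ := hzb
  -- reduce bn to the Apéry set
  obtain ⟨a', ha', b₀, hb₀, hred⟩ := G.ap_reduce bn hbn 0 G.S₁_zero
  -- from q*0 + p*bn = q*a' + p*b₀ and uniqueness machinery : bn = b₀ + k q, a' = k p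
  have hble : b₀ ≤ bn := by
    by_contra hcon
    push_neg at hcon
    obtain ⟨t, ht1, ht2⟩ := G.class_eq hred hcon.le
    rcases Nat.eq_zero_or_pos t with ht | ht
    · subst ht; simp at ht1; omega
    · exfalso
      apply hb₀.2
      refine ⟨bn + (t - 1) * G.q, mem_add_mul G.S₂_add G.hq hbn (t - 1), ?_⟩
      have : (t - 1) * G.q + G.q = t * G.q := by
        cases t with
        | zero => omega
        | succ t => simp [Nat.succ_sub_one]; ring
      omega
  obtain ⟨k, hk1, hk2⟩ := G.class_eq hred.symm hble
  -- hk1 : bn = b₀ + k q ; hk2 : a' = 0 + k p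
  set A : ℤ := (z - G.p * bn) / G.q + k * G.p with hA
  have haq : (G.q : ℤ) * ((z - G.p * bn) / G.q) = z - G.p * bn := Int.mul_ediv_cancel' hdvd
  have hzA : z = G.q * A + G.p * b₀ := by
    have h1 : (bn : ℤ) = b₀ + k * G.q := by exact_mod_cast hk1
    rw [hA]
    push_cast
    nlinarith [haq, h1]
  have hnA : ¬ zmem G.S₁ A := by
    rintro ⟨an, han, hanA⟩
    apply hz
    rw [hzA, ← hanA]
    exact G.zmem_S_comb ⟨an, han, rfl⟩ ⟨b₀, hb₀.1, rfl⟩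
  have hzF₁A : zmem G.S₁ (Frob G.S₁ - A) := by
    apply (hsym₁ (Frob G.S₁ - A)).mpr
    have he : Frob G.S₁ - (Frob G.S₁ - A) = A := by ring
    rw [he]
    exact hnA
  have hzc : zmem G.S₂ (Frob G.S₂ + G.q - b₀) := by
    apply (hsym₂ (Frob G.S₂ + G.q - b₀)).mpr
    have he : Frob G.S₂ - (Frob G.S₂ + G.q - b₀) = (b₀ : ℤ) - G.q := by ring
    rw [he]
    exact G.ap_not_zmem hb₀
  have hfinal := G.zmem_S_comb hzF₁A hzc
  have heq2 : (G.q : ℤ) * (Frob G.S₁ - A) + G.p * (Frob G.S₂ + G.q - b₀) = Frob G.S - z := by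
    rw [G.frob_S, hzA]
    ring
  rwa [heq2] at hfinal

/-- symmetry descends from the gluing to `S₁`. -/
lemma sym_S₁_of_sym_S (hsym : IsSymmetric G.S) : IsSymmetric G.S₁ := by
  obtain ⟨N₁, hN₁⟩ := G.S₁_bound
  rw [isSymmetric_iff G.S₁_add hN₁]
  intro w hw
  have hq0 : (0 : ℤ) < G.q := by have := G.one_lt_q; exact_mod_cast Nat.lt_of_lt_of_le Nat.zero_lt_one this.le
  -- q w is not in S
  have hqw : ¬ zmem G.S ((G.q : ℤ) * w) := by
    rintro ⟨s, hs, hcast⟩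
    obtain ⟨a, ha, b, hb, rfl⟩ := G.mem_S_iff.mp hs
    have heq : (G.q : ℤ) * w = G.q * a + G.p * b := by push_cast at hcast ⊢; linarith
    have hdvd : (G.q : ℤ) ∣ (b : ℤ) := by
      apply G.coprime_qp.dvd_of_dvd_mul_left
      exact ⟨w - a, by linarith [heq]⟩
    obtain ⟨β, hβ⟩ := hdvd
    have hβ0 : 0 ≤ β := by
      by_contra hneg
      push_neg at hneg
      linarith [mul_neg_of_pos_of_neg hq0 hneg, hβ, Int.natCast_nonneg b]
    have hwa : w = (a : ℤ) + G.p * β := by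
      have h1 : (G.q : ℤ) * w = G.q * ((a : ℤ) + G.p * β) := by rw [heq, hβ]; ring
      exact mul_left_cancel₀ (by omega) h1
    apply hw
    refine ⟨a + β.toNat * G.p, mem_add_mul G.S₁_add G.hp ha β.toNat, ?_⟩
    push_cast [Int.toNat_of_nonneg hβ0]
    linarith [hwa]
  have hzmemF : zmem G.S (Frob G.S - (G.q : ℤ) * w) := by
    apply (hsym (Frob G.S - (G.q : ℤ) * w)).mpr
    have he : Frob G.S - (Frob G.S - (G.q : ℤ) * w) = (G.q : ℤ) * w := by ring
    rw [he]
    exact hqw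
  obtain ⟨s, hs, hcast⟩ := hzmemF
  obtain ⟨a, ha, b, hb, rfl⟩ := G.mem_S_iff.mp hs
  have heq : (G.q : ℤ) * Frob G.S₁ + G.p * Frob G.S₂ + G.p * G.q - G.q * w
      = G.q * a + G.p * b := by
    rw [← G.frob_S]
    push_cast at hcast ⊢
    linarith
  have hdvd : (G.q : ℤ) ∣ ((b : ℤ) - Frob G.S₂ - G.q) := by
    apply G.coprime_qp.dvd_of_dvd_mul_left
    exact ⟨Frob G.S₁ - w - a, by linarith [heq]⟩
  obtain ⟨γ, hγ⟩ := hdvd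
  have hFwa : Frob G.S₁ - w = (a : ℤ) + G.p * γ := by
    have h1 : (G.q : ℤ) * (Frob G.S₁ - w) = G.q * ((a : ℤ) + G.p * γ) := by
      have h2 : (G.p : ℤ) * ((b : ℤ) - Frob G.S₂ - G.q) = G.p * (G.q * γ) := by rw [hγ]
      nlinarith [heq]
    exact mul_left_cancel₀ (by omega) h1
  rcases le_or_gt 0 γ with hγ0 | hγ0
  · refine ⟨a + γ.toNat * G.p, mem_add_mul G.S₁_add G.hp ha γ.toNat, ?_⟩
    push_cast [Int.toNat_of_nonneg hγ0]
    linarith [hFwa]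
  · exfalso
    apply G.frob₂_not_zmem
    refine ⟨b + (-1 - γ).toNat * G.q, mem_add_mul G.S₂_add G.hq hb _, ?_⟩
    push_cast [Int.toNat_of_nonneg (show (0:ℤ) ≤ -1 - γ by omega)]
    linarith [hγ, show ((-1:ℤ) - γ) * (G.q:ℤ) = -(G.q:ℤ) - (G.q:ℤ) * γ from by ring]

/-! ### Apéry sets and M-purity -/

lemma zero_mem_Ap₂ : 0 ∈ Ap G.S₂ G.q := by
  refine ⟨G.S₂_zero, ?_⟩
  rintro ⟨t, ht, htq⟩
  have := G.one_lt_q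
  omega

lemma cancel_q {a a' c : ℕ} (h : G.q * a + c = G.q * a' + c) : a = a' := by
  have h1 : G.q * a = G.q * a' := by omega
  exact Nat.eq_of_mul_eq_mul_left (by have := G.one_lt_q; omega) h1

lemma cancel_p {b b' c : ℕ} (h : c + G.p * b = c + G.p * b') : b = b' := by
  have h1 : G.p * b = G.p * b' := by omega
  exact Nat.eq_of_mul_eq_mul_left (by have := G.one_lt_p; omega) h1

/-- the Apéry set of the gluing factors. -/
lemma mem_Ap_S_iff {w : ℕ} : w ∈ Ap G.S (G.q * G.m₁) ↔
    ∃ a ∈ Ap G.S₁ G.m₁, ∃ b ∈ Ap G.S₂ G.q, w = G.q * a + G.p * b := by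
  constructor
  · intro hw
    obtain ⟨a, ha, b, hb, rfl⟩ := G.exists_ap_rep hw.1
    refine ⟨a, ⟨ha, ?_⟩, b, hb, rfl⟩
    rintro ⟨u, hu, rfl⟩
    apply hw.2
    exact ⟨G.q * u + G.p * b, G.mem_S_iff.mpr ⟨u, hu, b, hb.1, rfl⟩, by ring⟩
  · rintro ⟨a, ha, b, hb, rfl⟩
    refine ⟨G.mem_S_iff.mpr ⟨a, ha.1, b, hb.1, rfl⟩, ?_⟩
    rintro ⟨t, ht, hteq⟩
    obtain ⟨α, hα, β, hβ, rfl⟩ := G.exists_ap_rep ht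
    have heq : G.q * a + G.p * b = G.q * (α + G.m₁) + G.p * β := by
      rw [hteq]; ring
    obtain ⟨h1, h2⟩ := G.ap_rep_unique hb hβ heq
    exact ha.2 ⟨α, hα, h1⟩

/-- transfer of the `ord (s + m) = ord s + 1` condition. -/
lemma ord_cond_transfer (hG : G.Specific) :
    (∀ s ∈ G.S, ordS G.S (s + G.q * G.m₁) = ordS G.S s + 1) ↔
    (∀ s ∈ G.S₁, ordS G.S₁ (s + G.m₁) = ordS G.S₁ s + 1) := by
  constructor
  · intro h a ha
    have h1 : G.q * a + G.q * G.m₁ = G.q * (a + G.m₁) + G.p * 0 := by ring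
    have h2 : G.q * a = G.q * a + G.p * 0 := by ring
    have h3 := h (G.q * a) (G.q_mul_mem ha)
    rw [h1] at h3
    rw [G.ord_formula hG (G.S₁_add _ ha _ G.m₁_mem) G.zero_mem_Ap₂] at h3
    rw [h2, G.ord_formula hG ha G.zero_mem_Ap₂] at h3
    simpa [ordS_zero] using h3
  · intro h s hs
    obtain ⟨a, ha, b, hb, rfl⟩ := G.exists_ap_rep hs
    have h1 : G.q * a + G.p * b + G.q * G.m₁ = G.q * (a + G.m₁) + G.p * b := by ring
    rw [h1, G.ord_formula hG (G.S₁_add _ ha _ G.m₁_mem) hb,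
      G.ord_formula hG ha hb, h a ha]
    ring

/-- forward direction : maximality in the gluing gives maximality of components. -/
lemma maxM_forward (hG : G.Specific) {a b : ℕ} (ha : a ∈ Ap G.S₁ G.m₁)
    (hb : b ∈ Ap G.S₂ G.q) (hw : G.q * a + G.p * b ∈ MaxMAp G.S (G.q * G.m₁)) :
    a ∈ MaxMAp G.S₁ G.m₁ ∧ b ∈ MaxMAp G.S₂ G.q := by
  constructor
  · refine ⟨ha, ?_⟩
    rintro a'' ha'' ⟨z₁, hz₁, rfl, hord⟩
    have hy : G.q * (a + z₁) + G.p * b ∈ Ap G.S (G.q * G.m₁) :=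
      G.mem_Ap_S_iff.mpr ⟨a + z₁, ha'', b, hb, rfl⟩
    have key : G.q * (a + z₁) + G.p * b = G.q * a + G.p * b := by
      apply hw.2 _ hy
      refine ⟨G.q * z₁, G.q_mul_mem hz₁, by ring, ?_⟩
      have e1 : G.q * z₁ = G.q * z₁ + G.p * 0 := by ring
      rw [G.ord_formula hG ha''.1 hb, G.ord_formula hG ha.1 hb,
        e1, G.ord_formula hG hz₁ G.zero_mem_Ap₂, hord, ordS_zero]
      ring
    have : a + z₁ = a := G.cancel_q key
    omega
  · refine ⟨hb, ?_⟩
    rintro b'' hb'' ⟨z₂, hz₂, rfl, hord⟩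
    have hy : G.q * a + G.p * (b + z₂) ∈ Ap G.S (G.q * G.m₁) :=
      G.mem_Ap_S_iff.mpr ⟨a, ha, b + z₂, hb'', rfl⟩
    have key : G.q * a + G.p * (b + z₂) = G.q * a + G.p * b := by
      apply hw.2 _ hy
      refine ⟨G.p * z₂, G.p_mul_mem hz₂, by ring, ?_⟩
      -- ord_S (p z₂) = ord₂ z₂ by squeezing
      have e0 : G.q * a + G.p * (b + z₂) = (G.q * a + G.p * b) + G.p * z₂ := by ring
      have h1 : ordS G.S (G.q * a + G.p * (b + z₂)) =
          ordS G.S (G.q * a + G.p * b) + ordS G.S₂ (b + z₂) - ordS G.S₂ b := by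
        rw [G.ord_formula hG ha.1 hb'', G.ord_formula hG ha.1 hb]
        have := hord
        omega
      have h2 : ordS G.S₂ z₂ ≤ ordS G.S (G.p * z₂) := by
        have e1 : G.p * z₂ = G.q * 0 + G.p * z₂ := by ring
        rw [e1]
        have := G.ord_lower G.S₁_zero hz₂
        simpa [ordS_zero] using this
      have h3 : ordS G.S (G.q * a + G.p * b) + ordS G.S (G.p * z₂) ≤
          ordS G.S (G.q * a + G.p * (b + z₂)) := by
        rw [e0]
        exact ordS_add_ge G.S_add (G.mem_S_iff.mpr ⟨a, ha.1, b, hb.1, rfl⟩)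
          (G.p_mul_mem hz₂)
      rw [G.ord_formula hG ha.1 hb'', G.ord_formula hG ha.1 hb] at *
      omega
    have : b + z₂ = b := G.cancel_p key
    omega

/-- backward direction : maximal components give a maximal element of the gluing. -/
lemma maxM_backward (hG : G.Specific) {a b : ℕ} (ha : a ∈ MaxMAp G.S₁ G.m₁)
    (hb : b ∈ MaxMAp G.S₂ G.q) :
    G.q * a + G.p * b ∈ MaxMAp G.S (G.q * G.m₁) := by
  obtain ⟨N, hN⟩ := G.S₂_bound
  refine ⟨G.mem_Ap_S_iff.mpr ⟨a, ha.1, b, hb.1, rfl⟩, ?_⟩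
  rintro y hy ⟨z, hz, rfl, hord⟩
  obtain ⟨a', ha', b', hb', heqy⟩ := G.mem_Ap_S_iff.mp hy
  obtain ⟨α, hα, β, hβ, rfl⟩ := G.exists_ap_rep hz
  -- reduce : q a' + p b' = q (a + α) + p (b + β)
  have heq : G.q * a' + G.p * b' = G.q * (a + α) + G.p * (b + β) := by
    rw [← heqy]; ring
  have hble : b' ≤ b + β := by
    by_contra hcon
    push_neg at hcon
    obtain ⟨t, ht1, ht2⟩ := G.class_eq heq.symm hcon.le
    rcases Nat.eq_zero_or_pos t with ht | ht
    · subst ht; simp at ht1; omega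
    · apply hb'.2
      refine ⟨(b + β) + (t - 1) * G.q, mem_add_mul G.S₂_add G.hq
        (G.S₂_add _ hb.1.1 _ hβ.1) (t - 1), ?_⟩
      have : (t - 1) * G.q + G.q = t * G.q := by
        cases t with
        | zero => omega
        | succ t => simp [Nat.succ_sub_one]; ring
      omega
  obtain ⟨t, ht1, ht2⟩ := G.class_eq heq hble
  -- ht1 : b + β = b' + t q ; ht2 : a' = (a + α) + t p
  have hordy : ordS G.S (G.q * a' + G.p * b') = ordS G.S₁ a' + ordS G.S₂ b' :=
    G.ord_formula hG ha'.1 hb'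
  have hordw : ordS G.S (G.q * a + G.p * b) = ordS G.S₁ a + ordS G.S₂ b :=
    G.ord_formula hG ha.1.1 hb.1
  have hordz : ordS G.S (G.q * α + G.p * β) = ordS G.S₁ α + ordS G.S₂ β :=
    G.ord_formula hG hα hβ
  rw [heqy] at hord
  rw [hordy, hordw, hordz] at hord
  -- (A)
  have hA : ordS G.S₁ a + ordS G.S₁ (α + t * G.p) ≤ ordS G.S₁ a' := by
    have e : a + α + t * G.p = a + (α + t * G.p) := by ring
    rw [ht2, e]
    exact ordS_add_ge G.S₁_add ha.1.1 (G.S₁_add _ hα _ (by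
      simpa using mem_add_mul G.S₁_add G.hp G.S₁_zero t))
  have hA2 : ordS G.S₁ α + t * ordS G.S₁ G.p ≤ ordS G.S₁ (α + t * G.p) := by
    calc ordS G.S₁ α + t * ordS G.S₁ G.p ≤ ordS G.S₁ α + ordS G.S₁ (t * G.p) := by
          have := ordS_nsmul_ge G.S₁_zero G.S₁_add G.hp t
          omega
    _ ≤ ordS G.S₁ (α + t * G.p) := ordS_add_ge G.S₁_add hα (by
          simpa using mem_add_mul G.S₁_add G.hp G.S₁_zero t)
  -- (B)
  have hB : ordS G.S₂ b + ordS G.S₂ β ≤ ordS G.S₂ b' + t * ordS G.S₁ G.p := by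
    have h1 : ordS G.S₂ b + ordS G.S₂ β ≤ ordS G.S₂ (b + β) :=
      ordS_add_ge G.S₂_add hb.1.1 hβ.1
    have h2 : ordS G.S₂ (b + β) ≤ ordS G.S₂ b' + t * (ordS G.S₂ G.q + lS G.S₂ G.q) := by
      rw [ht1]
      exact claimB_iter G.S₂_zero G.S₂_add hN G.hq hb'.1 t
    have h3 : t * (ordS G.S₂ G.q + lS G.S₂ G.q) ≤ t * ordS G.S₁ G.p :=
      Nat.mul_le_mul_left t hG
    omega
  -- squeeze
  have hEa : ordS G.S₁ a' = ordS G.S₁ a + ordS G.S₁ (α + t * G.p) := by omega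
  have haa : a' = a := by
    apply ha.2 a' ha'
    exact ⟨α + t * G.p, G.S₁_add _ hα _ (by
      simpa using mem_add_mul G.S₁_add G.hp G.S₁_zero t), by omega, hEa⟩
  have hzero : α + t * G.p = 0 := by
    rw [haa] at ht2
    omega
  have hα0 : α = 0 := by omega
  have ht0 : t = 0 := by
    have := G.one_lt_p
    rcases Nat.eq_zero_or_pos t with h | h
    · exact h
    · exfalso; nlinarith
  have hbb : b' = b + β := by
    rw [ht0] at ht1
    simp at ht1
    omega
  have hEb : ordS G.S₂ b' = ordS G.S₂ b + ordS G.S₂ β := by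
    rw [haa] at hord
    rw [hα0, ordS_zero] at hord
    omega
  have hbfin : b' = b := by
    apply hb.2 b' hb'
    exact ⟨β, hβ.1, hbb, hEb⟩
  rw [heqy, haa, hbfin]

lemma maxMAp₂_nonempty : ∃ b, b ∈ MaxMAp G.S₂ G.q := by
  obtain ⟨N, hN⟩ := G.S₂_bound
  have hbdd : BddAbove (Ap G.S₂ G.q) := by
    refine ⟨N + G.q, fun b hb => ?_⟩
    by_contra h
    push_neg at h
    exact hb.2 ⟨b - G.q, hN _ (by omega), by omega⟩
  have hne : (Ap G.S₂ G.q).Nonempty := ⟨0, G.zero_mem_Ap₂⟩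
  refine ⟨sSup (Ap G.S₂ G.q), Nat.sSup_mem hne hbdd, ?_⟩
  rintro y hy ⟨z, hz, hyz, _⟩
  have h1 : y ≤ sSup (Ap G.S₂ G.q) := le_csSup hbdd hy
  omega

/-- M-purity transfer. -/
lemma purity_transfer (hG : G.Specific) (hMp₂ : MPureWrt G.S₂ G.q) :
    MPureWrt G.S (G.q * G.m₁) ↔ MPureWrt G.S₁ G.m₁ := by
  constructor
  · intro hP w₁ hw₁ w₁' hw₁'
    obtain ⟨b, hbmax⟩ := G.maxMAp₂_nonempty
    have h1 := G.maxM_backward hG hw₁ hbmax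
    have h2 := G.maxM_backward hG hw₁' hbmax
    have h3 := hP _ h1 _ h2
    rw [G.ord_formula hG hw₁.1.1 hbmax.1, G.ord_formula hG hw₁'.1.1 hbmax.1] at h3
    omega
  · intro hP w hw w' hw'
    obtain ⟨a, ha, b, hb, hweq⟩ := G.mem_Ap_S_iff.mp hw.1
    obtain ⟨a', ha', b', hb', hweq'⟩ := G.mem_Ap_S_iff.mp hw'.1
    subst hweq
    subst hweq'
    obtain ⟨hamax, hbmax⟩ := G.maxM_forward hG ha hb hw
    obtain ⟨hamax', hbmax'⟩ := G.maxM_forward hG ha' hb' hw'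
    rw [G.ord_formula hG ha.1 hb, G.ord_formula hG ha'.1 hb']
    have h1 := hP _ hamax _ hamax'
    have h2 := hMp₂ _ hbmax _ hbmax'
    omega

end Gluing

/-- for a specific gluing `S` of `S₁` and `S₂` with `S₂` symmetric
and M-pure with respect to `q`:
[`ord_S(s + qm₁) = ord_S(s)+1` for all `s ∈ S`, and `S` is symmetric and M-pure] iff
[`ord_{S₁}(s + m₁) = ord_{S₁}(s)+1` for all `s ∈ S₁`, and `S₁` is symmetric and M-pure];
equivalently (by Bryant's criterion) `G(S)` is Gorenstein iff `G(S₁)` is Gorenstein. -/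
theorem stmt17 (G : Gluing) (hG : G.Specific)
    (hsym₂ : IsSymmetric G.S₂) (hMp₂ : MPureWrt G.S₂ G.q) :
    ((∀ s ∈ G.S, ordS G.S (s + G.q * G.m₁) = ordS G.S s + 1) ∧
        IsSymmetric G.S ∧ MPure G.S) ↔
      ((∀ s ∈ G.S₁, ordS G.S₁ (s + G.m₁) = ordS G.S₁ s + 1) ∧
        IsSymmetric G.S₁ ∧ MPure G.S₁) := by
  have hmult : mult G.S = G.q * G.m₁ := G.mult_S hG
  have hmult₁ : mult G.S₁ = G.m₁ := G.mult_S₁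
  constructor
  · rintro ⟨h1, h2, h3⟩
    refine ⟨(G.ord_cond_transfer hG).mp h1, G.sym_S₁_of_sym_S h2, ?_⟩
    have h3' : MPureWrt G.S (G.q * G.m₁) := by
      have h4 : MPureWrt G.S (mult G.S) := h3
      rwa [hmult] at h4
    have h5 := (G.purity_transfer hG hMp₂).mp h3'
    show MPureWrt G.S₁ (mult G.S₁)
    rwa [hmult₁]
  · rintro ⟨h1, h2, h3⟩
    refine ⟨(G.ord_cond_transfer hG).mpr h1, G.sym_S_of_sym_S₁ hsym₂ h2, ?_⟩
    have h3' : MPureWrt G.S₁ G.m₁ := by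
      have h4 : MPureWrt G.S₁ (mult G.S₁) := h3
      rwa [hmult₁] at h4
    show MPureWrt G.S (mult G.S)
    rw [hmult]
    exact (G.purity_transfer hG hMp₂).mpr h3'
end
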